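/- arXiv:2007.07808 — 2 statements merged into one kernel-verified Lean document; each statement's English description precedes it below -/
import Mathlib

section
/- Let N₀ be the five-node network described below and let U ∈ ℕ with U ≥ 1. Equip N₀ with the network inflow rate u_s = 2·1_{[0,U]} at node s and zero inflow at all other nodes. Then every instantaneous dynamic equilibrium (IDE) flow in this network has at least ⌊U/4⌋ phases. Consequently, the number of phases of an IDE flow is in general not polynomially bounded in the encoding size of the instance (which is O(log U) here). -/
open MeasureTheory Set

/-- A walk in a directed graph given by `tail`/`head` maps: `IsWalk tail head v w L`
means the list of edges `L` forms a walk from `v` to `w`. -/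
def IsWalk {V E : Type} (tail head : E → V) : V → V → List E → Prop
  | v, w, [] => v = w
  | v, w, e :: L => tail e = v ∧ IsWalk tail head (head e) w L

/-- A right-constant step function with finitely many jump points. -/
def RightConstantStep (g : ℝ → ℝ) : Prop :=
  ∃ s : Finset ℝ, ∀ x y : ℝ, x ≤ y → (∀ p ∈ s, ¬ (x < p ∧ p ≤ y)) → g x = g y

/-- A single-sink network: a finite directed graph with positive rational capacities
and travel times, a sink reachable from every node, and nonnegative rational-valued
right-constant step network inflow rates (zero at the sink and for negative times). -/
structure Network (V E : Type) [Fintype V] [DecidableEq V] [Fintype E] [DecidableEq E] where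
  tail : E → V
  head : E → V
  cap : E → ℝ
  time : E → ℝ
  sink : V
  u : V → ℝ → ℝ
  cap_pos : ∀ e, 0 < cap e
  cap_rat : ∀ e, ∃ q : ℚ, cap e = (q : ℝ)
  time_pos : ∀ e, 0 < time e
  time_rat : ∀ e, ∃ q : ℚ, time e = (q : ℝ)
  reach : ∀ v, ∃ L : List E, IsWalk tail head v sink L
  u_nonneg : ∀ v θ, 0 ≤ u v θ
  u_rat : ∀ v θ, ∃ q : ℚ, u v θ = (q : ℝ)
  u_sink : ∀ θ, u sink θ = 0
  u_neg : ∀ v θ, θ < 0 → u v θ = 0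
  u_step : ∀ v, RightConstantStep (u v)

variable {V E : Type} [Fintype V] [DecidableEq V] [Fintype E] [DecidableEq E]

/-- The edges leaving a node `v`, i.e. `δ⁺(v)`. -/
def Network.outEdges (N : Network V E) (v : V) : Finset E :=
  Finset.univ.filter (fun e => N.tail e = v)

/-- The edges entering a node `v`, i.e. `δ⁻(v)`. -/
def Network.inEdges (N : Network V E) (v : V) : Finset E :=
  Finset.univ.filter (fun e => N.head e = v)

/-- `τ_min`, the minimal travel time of an edge. -/
noncomputable def Network.tauMin (N : Network V E) : ℝ := sInf (Set.range N.time)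

/-- `max_ζ u_v(ζ)`, the maximal network inflow rate at `v`. -/
noncomputable def Network.uMax (N : Network V E) (v : V) : ℝ := ⨆ θ : ℝ, N.u v θ

/-- The maximal out-degree `Δ` of the network. -/
def Network.maxOutDeg (N : Network V E) : ℕ :=
  Finset.univ.sup (fun v => (N.outEdges v).card)

/-- All network inflow rates have bounded support. -/
def Network.BddInflow (N : Network V E) : Prop :=
  ∀ v, ∃ B : ℝ, ∀ θ, B ≤ θ → N.u v θ = 0

/-- The directed graph of the network is acyclic. -/
def Network.Acyclic (N : Network V E) : Prop :=
  ∀ (v : V) (L : List E), L ≠ [] → ¬ IsWalk N.tail N.head v v L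

/-- A flow over time: locally integrable nonnegative edge in- and outflow rates. -/
structure FlowOverTime (N : Network V E) where
  fplus : E → ℝ → ℝ
  fminus : E → ℝ → ℝ
  fplus_nonneg : ∀ e θ, 0 ≤ fplus e θ
  fminus_nonneg : ∀ e θ, 0 ≤ fminus e θ
  fplus_int : ∀ e θ, IntervalIntegrable (fplus e) volume 0 θ
  fminus_int : ∀ e θ, IntervalIntegrable (fminus e) volume 0 θ

/-- The queue length `q_e(θ) = F⁺_e(θ) − F⁻_e(θ + τ_e)`. -/
noncomputable def queueOf (N : Network V E) (fplus fminus : E → ℝ → ℝ) (e : E) (θ : ℝ) : ℝ :=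
  (∫ ζ in (0:ℝ)..θ, fplus e ζ) - ∫ ζ in (0:ℝ)..(θ + N.time e), fminus e ζ

/-- The instantaneous travel time `c_e(θ) = τ_e + q_e(θ)/ν_e`. -/
noncomputable def ctimeOf (N : Network V E) (fplus fminus : E → ℝ → ℝ) (e : E) (θ : ℝ) : ℝ :=
  N.time e + queueOf N fplus fminus e θ / N.cap e

/-- The node label `ℓ_v(θ)`: the shortest instantaneous travel time from `v` to the sink. -/
noncomputable def labelOf (N : Network V E) (fplus fminus : E → ℝ → ℝ) (v : V) (θ : ℝ) : ℝ :=
  sInf { r : ℝ | ∃ L : List E, IsWalk N.tail N.head v N.sink L ∧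
                  r = (L.map (fun e => ctimeOf N fplus fminus e θ)).sum }

/-- Edge `e` is active at time `θ`: `ℓ_{tail e}(θ) = c_e(θ) + ℓ_{head e}(θ)`. -/
def ActiveOf (N : Network V E) (fplus fminus : E → ℝ → ℝ) (e : E) (θ : ℝ) : Prop :=
  labelOf N fplus fminus (N.tail e) θ =
    ctimeOf N fplus fminus e θ + labelOf N fplus fminus (N.head e) θ

/-- Feasibility of a flow over time: flow conservation (i)/(ii), no outflow before `τ_e`
(iii), and queues operating at capacity (iv). -/
def Feasible (N : Network V E) (f : FlowOverTime N) : Prop :=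
  (∀ v, v ≠ N.sink → ∀ θ : ℝ, 0 ≤ θ →
      (∑ e ∈ N.outEdges v, f.fplus e θ) - (∑ e ∈ N.inEdges v, f.fminus e θ) = N.u v θ) ∧
  (∀ θ : ℝ, 0 ≤ θ →
      (∑ e ∈ N.outEdges N.sink, f.fplus e θ) - (∑ e ∈ N.inEdges N.sink, f.fminus e θ) ≤ 0) ∧
  (∀ e, ∀ θ : ℝ, 0 ≤ θ → θ < N.time e → f.fminus e θ = 0) ∧
  (∀ e, ∀ θ : ℝ, 0 ≤ θ →
      f.fminus e (θ + N.time e) =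
        if 0 < queueOf N f.fplus f.fminus e θ then N.cap e
        else min (f.fplus e θ) (N.cap e))

/-- An instantaneous dynamic equilibrium: a feasible flow that only sends flow
into currently active edges. -/
def IsIDE (N : Network V E) (f : FlowOverTime N) : Prop :=
  Feasible N f ∧
  ∀ e, ∀ θ : ℝ, 0 ≤ θ → 0 < f.fplus e θ → ActiveOf N f.fplus f.fminus e θ

/-- `g` is almost everywhere constant on the set `S`. -/
def AEConstOn (g : ℝ → ℝ) (S : Set ℝ) : Prop :=
  ∃ c : ℝ, ∀ᵐ θ ∂(volume.restrict S), g θ = c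

/-- The `i`-th segment of the partition `0 = t 0 < t 1 < ⋯ < t n < ∞`. -/
def phaseSeg (n : ℕ) (t : ℕ → ℝ) (i : ℕ) : Set ℝ :=
  if i < n then Set.Ioo (t i) (t (i+1)) else Set.Ioi (t n)

/-- `ℝ≥0` splits (up to finitely many points) into the `n+1` intervals given by
`t`, on each of which all edge in- and outflow rates are a.e. constant; i.e. the
flow has at most `n+1` phases. -/
def PhasePartition (N : Network V E) (f : FlowOverTime N) (n : ℕ) (t : ℕ → ℝ) : Prop :=
  t 0 = 0 ∧ (∀ i, i < n → t i < t (i+1)) ∧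
  ∀ i, i ≤ n → ∀ e, AEConstOn (f.fplus e) (phaseSeg n t i) ∧ AEConstOn (f.fminus e) (phaseSeg n t i)


/-! ### Auxiliary general lemmas -/

section Helpers

open Filter Topology

/-- Last crossing: the supremum of a closed condition on `[c,d]`. -/
lemma IDEx.lastP {P : ℝ → Prop} (hP : IsClosed {x | P x}) {c d : ℝ} (hcd : c ≤ d)
    (hc : P c) :
    ∃ x, x ∈ Set.Icc c d ∧ P x ∧ ∀ ζ, x < ζ → ζ ≤ d → ¬ P ζ := by
  set S : Set ℝ := Set.Icc c d ∩ {x | P x} with hS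
  have hSne : S.Nonempty := ⟨c, ⟨Set.left_mem_Icc.2 hcd, hc⟩⟩
  have hScomp : IsCompact S := isCompact_Icc.inter_right hP
  have hx := hScomp.sSup_mem hSne
  refine ⟨sSup S, hx.1, hx.2, ?_⟩
  intro ζ h1 h2 hPζ
  have hζS : ζ ∈ S := ⟨⟨le_trans (le_trans hx.1.1 (le_of_lt h1)) (le_refl ζ), h2⟩, hPζ⟩
  have := le_csSup hScomp.bddAbove hζS
  linarith

/-- From an a.e. property on a nonempty open interval, extract a point. -/
lemma IDEx.aePoint {a b : ℝ} (hab : a < b) {P : ℝ → Prop}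
    (h : ∀ᵐ θ ∂(volume.restrict (Set.Ioo a b)), P θ) : ∃ θ, θ ∈ Set.Ioo a b ∧ P θ := by
  have hne : volume.restrict (Set.Ioo a b) ≠ 0 := by
    intro h0
    have := congrArg (fun μ : Measure ℝ => μ Set.univ) h0
    simp only [Measure.restrict_apply_univ, Real.volume_Ioo] at this
    rw [show (0 : Measure ℝ) Set.univ = 0 from rfl] at this
    rw [ENNReal.ofReal_eq_zero] at this
    linarith
  have : (ae (volume.restrict (Set.Ioo a b))).NeBot := MeasureTheory.ae_neBot.2 hne
  obtain ⟨θ, hθ⟩ := (h.and (ae_restrict_mem measurableSet_Ioo)).exists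
  exact ⟨θ, hθ.2, hθ.1⟩

/-- A continuous function which is a.e. `≤ 0` on `(a,b)` is `≤ 0` on `[a,b]`. -/
lemma IDEx.densIcc {g : ℝ → ℝ} (hg : Continuous g) {a b : ℝ} (hab : a < b)
    (h : ∀ᵐ θ ∂(volume.restrict (Set.Ioo a b)), g θ ≤ 0) : ∀ x ∈ Set.Icc a b, g x ≤ 0 := by
  intro x hx
  by_contra hgx
  push_neg at hgx
  have hV : IsOpen ({y | 0 < g y} ∩ Set.Ioo a b) :=
    (isOpen_lt continuous_const hg).inter isOpen_Ioo
  have hxcl : x ∈ closure (Set.Ioo a b) := by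
    rw [closure_Ioo hab.ne]; exact hx
  have hVne : ({y | 0 < g y} ∩ Set.Ioo a b).Nonempty := by
    rcases (mem_closure_iff.1 hxcl) {y | 0 < g y} (isOpen_lt continuous_const hg) hgx with
      ⟨y, hy1, hy2⟩
    exact ⟨y, hy1, hy2⟩
  have hpos := hV.measure_pos volume hVne
  have h0 : volume ({y | 0 < g y} ∩ Set.Ioo a b) = 0 := by
    have h' := (ae_restrict_iff' measurableSet_Ioo).1 h
    rw [ae_iff] at h'
    refine measure_mono_null ?_ h'
    intro y hy
    simp only [Set.mem_setOf_eq, not_forall, not_le, exists_prop]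
    exact ⟨hy.2, hy.1⟩
  rw [h0] at hpos; exact lt_irrefl _ hpos

/-- Shift an a.e. statement on an interval by one. -/
lemma IDEx.aeShift {g : ℝ → ℝ} {a b : ℝ} {P : ℝ → Prop}
    (h : ∀ᵐ θ ∂(volume.restrict (Set.Ioo a b)), P (g θ)) :
    ∀ᵐ ζ ∂(volume.restrict (Set.Ioo (a-1) (b-1))), P (g (ζ+1)) := by
  rw [ae_restrict_iff' measurableSet_Ioo] at h ⊢
  rw [ae_iff] at h ⊢
  have hsub : {ζ : ℝ | ¬ (ζ ∈ Set.Ioo (a-1) (b-1) → P (g (ζ+1)))} ⊆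
      (fun ζ : ℝ => ζ + 1) ⁻¹' {θ : ℝ | ¬ (θ ∈ Set.Ioo a b → P (g θ))} := by
    intro ζ hζ
    simp only [Set.mem_setOf_eq, not_forall, Set.mem_Ioo, Set.mem_preimage] at hζ ⊢
    obtain ⟨⟨h1, h2⟩, h3⟩ := hζ
    exact ⟨⟨by linarith, by linarith⟩, h3⟩
  refine measure_mono_null hsub ?_
  rw [measure_preimage_add_right]
  exact h

/-- If all interval integrals of a locally integrable function vanish on `[r,m]`,
the function vanishes a.e. there. (Lebesgue differentiation.) -/
lemma IDEx.aeZeroOfIntegrals {g : ℝ → ℝ} (hg : MeasureTheory.LocallyIntegrable g volume)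
    {r m : ℝ}
    (h : ∀ s t, r ≤ s → s ≤ t → t ≤ m → ∫ ζ in s..t, g ζ = 0) :
    ∀ᵐ θ ∂(volume.restrict (Set.Ioo r m)), g θ = 0 := by
  have H := IsUnifLocDoublingMeasure.ae_tendsto_average (μ := volume) hg 1
  rw [ae_restrict_iff' measurableSet_Ioo]
  filter_upwards [H] with x hx hxmem
  have hmem : ∀ᶠ j in 𝓝[>] (0:ℝ), x ∈ Metric.closedBall x (1 * j) := by
    filter_upwards [self_mem_nhdsWithin] with j hj
    simp only [Metric.mem_closedBall, dist_self, one_mul]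
    exact le_of_lt hj
  have htendto := hx (fun j : ℝ => x) (fun j : ℝ => j) tendsto_id hmem
  have hev : ∀ᶠ j in 𝓝[>] (0:ℝ), (⨍ y in Metric.closedBall x j, g y) = 0 := by
    have hmemIoo : Set.Ioo (0:ℝ) (min (x - r) (m - x)) ∈ 𝓝[>] (0:ℝ) := by
      apply Ioo_mem_nhdsGT_of_mem
      constructor
      · rfl
      · simp only [lt_min_iff]
        exact ⟨by linarith [hxmem.1], by linarith [hxmem.2]⟩
    filter_upwards [hmemIoo] with j hj
    have hball : Metric.closedBall x j = Set.Icc (x - j) (x + j) := Real.closedBall_eq_Icc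
    rw [hball, MeasureTheory.setAverage_eq]
    have : ∫ y in Set.Icc (x - j) (x + j), g y = 0 := by
      rw [MeasureTheory.integral_Icc_eq_integral_Ioc,
        ← intervalIntegral.integral_of_le (by linarith [hj.1] : x - j ≤ x + j)]
      apply h
      · have := hj.2; have := lt_min_iff.1 this; linarith [this.1]
      · linarith [hj.1]
      · have := lt_min_iff.1 hj.2; linarith [this.2]
    rw [this, smul_zero]
  have h1 : Filter.Tendsto (fun _ : ℝ => (0:ℝ)) (𝓝[>] (0:ℝ)) (𝓝 (g x)) :=
    Filter.Tendsto.congr' (by filter_upwards [hev] with j hj using hj) htendto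
  have h2 : Filter.Tendsto (fun _ : ℝ => (0:ℝ)) (𝓝[>] (0:ℝ)) (𝓝 (0:ℝ)) :=
    tendsto_const_nhds
  exact tendsto_nhds_unique h1 h2


/-- Last crossing, version with nonempty hypothesis. -/
lemma IDEx.lastP2 {P : ℝ → Prop} (hP : IsClosed {x | P x}) {c d : ℝ}
    (hne : (Set.Icc c d ∩ {x | P x}).Nonempty) :
    ∃ x, x ∈ Set.Icc c d ∧ P x ∧ ∀ ζ, x < ζ → ζ ≤ d → ¬ P ζ := by
  set S : Set ℝ := Set.Icc c d ∩ {x | P x} with hS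
  have hScomp : IsCompact S := isCompact_Icc.inter_right hP
  have hx := hScomp.sSup_mem hne
  refine ⟨sSup S, hx.1, hx.2, ?_⟩
  intro ζ h1 h2 hPζ
  have hζS : ζ ∈ S := ⟨⟨le_trans hx.1.1 (le_of_lt h1), h2⟩, hPζ⟩
  have := le_csSup hScomp.bddAbove hζS
  linarith

/-- A function positive just right of `x` is nonnegative at `x`, by continuity. -/
lemma IDEx.rightLimit {g : ℝ → ℝ} (hg : Continuous g) {x d : ℝ} (hxd : x < d)
    (hpos : ∀ ζ, x < ζ → ζ ≤ d → 0 < g ζ) : 0 ≤ g x := by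
  by_contra h
  push_neg at h
  have hev : ∀ᶠ ζ in nhds x, g ζ < 0 := (hg.continuousAt).eventually_lt_const h
  obtain ⟨ε, hε, hball⟩ := Metric.eventually_nhds_iff.1 hev
  set ζ := min (x + ε / 2) d with hζ
  have hxζ : x < ζ := lt_min (by linarith) hxd
  have hζd : ζ ≤ d := min_le_right _ _
  have hdist : dist ζ x < ε := by
    rw [Real.dist_eq, abs_of_pos (by linarith : (0:ℝ) < ζ - x)]
    have : ζ ≤ x + ε / 2 := min_le_left _ _
    linarith
  exact absurd (hpos ζ hxζ hζd) (not_lt.2 (le_of_lt (hball hdist)))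

end Helpers


namespace IDEx

/-- Abbreviation for the queue lengths. -/
noncomputable def q (N : Network (Fin 5) (Fin 5)) (f : FlowOverTime N) (e : Fin 5) (θ : ℝ) : ℝ :=
  queueOf N f.fplus f.fminus e θ

section Net
set_option linter.unusedSectionVars false

variable {U : ℕ} {N : Network (Fin 5) (Fin 5)} {f : FlowOverTime N}
  (htail : N.tail = ![0, 0, 1, 2, 3]) (hhead : N.head = ![1, 2, 4, 3, 4])
  (hcap : N.cap = ![2, 2, 1, 1, 1]) (htime : ∀ e, N.time e = 1)
  (hsink : N.sink = (4 : Fin 5))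
  (hu : ∀ w θ, N.u w θ = if w = 0 ∧ 0 ≤ θ ∧ θ < (U : ℝ) then 2 else 0)
  (hf : IsIDE N f)

/-! #### Integrability -/

lemma intFp (e : Fin 5) (a b : ℝ) : IntervalIntegrable (f.fplus e) volume a b :=
  (f.fplus_int e a).symm.trans (f.fplus_int e b)

lemma intFm (e : Fin 5) (a b : ℝ) : IntervalIntegrable (f.fminus e) volume a b :=
  (f.fminus_int e a).symm.trans (f.fminus_int e b)

lemma intFm1 (e : Fin 5) (a b : ℝ) :
    IntervalIntegrable (fun ζ => f.fminus e (ζ + 1)) volume a b := by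
  have := (intFm (f := f) e (a + 1) (b + 1)).comp_add_right 1
  simpa using this

/-- Interval integral monotonicity requiring the bound only on the open interval. -/
lemma intMonoIoo {F G : ℝ → ℝ} {s t : ℝ} (hst : s ≤ t)
    (hF : IntervalIntegrable F volume s t) (hG : IntervalIntegrable G volume s t)
    (h : ∀ ζ, s < ζ → ζ < t → F ζ ≤ G ζ) : (∫ ζ in s..t, F ζ) ≤ ∫ ζ in s..t, G ζ := by
  apply intervalIntegral.integral_mono_ae_restrict hst hF hG
  rw [Filter.EventuallyLE, ae_restrict_iff' measurableSet_Icc, ae_iff]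
  refine measure_mono_null (fun ζ hζ => ?_)
    ((Set.finite_singleton s |>.insert t).measure_zero volume)
  simp only [Set.mem_setOf_eq, not_forall, not_le, exists_prop] at hζ
  obtain ⟨hmem, hlt⟩ := hζ
  by_contra hne
  simp only [Set.mem_insert_iff, Set.mem_singleton_iff, not_or] at hne
  exact absurd (h ζ (lt_of_le_of_ne hmem.1 (Ne.symm hne.2))
    (lt_of_le_of_ne hmem.2 hne.1)) (not_le.2 hlt)

/-- Interval integral congruence requiring equality only on the open interval. -/
lemma intCongrIoo {F G : ℝ → ℝ} {s t : ℝ} (hst : s ≤ t)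
    (hF : IntervalIntegrable F volume s t) (hG : IntervalIntegrable G volume s t)
    (h : ∀ ζ, s < ζ → ζ < t → F ζ = G ζ) : (∫ ζ in s..t, F ζ) = ∫ ζ in s..t, G ζ :=
  le_antisymm (intMonoIoo hst hF hG fun ζ h1 h2 => le_of_eq (h ζ h1 h2))
    (intMonoIoo hst hG hF fun ζ h1 h2 => ge_of_eq (h ζ h1 h2))

/-! #### Queue basics -/

include htime in
lemma qdiff (e : Fin 5) (s t : ℝ) :
    q N f e t - q N f e s =
      (∫ ζ in s..t, f.fplus e ζ) - ∫ ζ in s..t, f.fminus e (ζ + 1) := by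
  unfold q queueOf
  rw [htime e]
  have h1 : (∫ ζ in (0:ℝ)..s, f.fplus e ζ) + (∫ ζ in s..t, f.fplus e ζ)
      = ∫ ζ in (0:ℝ)..t, f.fplus e ζ :=
    intervalIntegral.integral_add_adjacent_intervals (intFp e 0 s) (intFp e s t)
  have h2 : (∫ ζ in (0:ℝ)..(s+1), f.fminus e ζ) + (∫ ζ in (s+1)..(t+1), f.fminus e ζ)
      = ∫ ζ in (0:ℝ)..(t+1), f.fminus e ζ :=
    intervalIntegral.integral_add_adjacent_intervals (intFm e 0 (s+1)) (intFm e (s+1) (t+1))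
  have h3 : (∫ ζ in s..t, f.fminus e (ζ + 1)) = ∫ ζ in (s+1)..(t+1), f.fminus e ζ :=
    intervalIntegral.integral_comp_add_right (f.fminus e) 1
  rw [h3]
  linarith

include htime in
lemma qcont (e : Fin 5) : Continuous (q N f e) := by
  have c1 : Continuous fun θ => ∫ ζ in (0:ℝ)..θ, f.fplus e ζ :=
    intervalIntegral.continuous_primitive (fun a b => intFp e a b) 0
  have c2 : Continuous fun θ => ∫ ζ in (0:ℝ)..θ, f.fminus e ζ :=
    intervalIntegral.continuous_primitive (fun a b => intFm e a b) 0
  have : q N f e = fun θ => (∫ ζ in (0:ℝ)..θ, f.fplus e ζ)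
      - ∫ ζ in (0:ℝ)..(θ + N.time e), f.fminus e ζ := rfl
  rw [this]
  exact c1.sub (c2.comp (continuous_id.add continuous_const))

include htime hf in
lemma fm_early (e : Fin 5) {θ : ℝ} (h0 : 0 ≤ θ) (h1 : θ < 1) : f.fminus e θ = 0 := by
  apply hf.1.2.2.1 e θ h0
  rw [htime e]; exact h1

include htime hf in
lemma hivq (e : Fin 5) {ζ : ℝ} (h0 : 0 ≤ ζ) :
    f.fminus e (ζ + 1) =
      if 0 < q N f e ζ then N.cap e else min (f.fplus e ζ) (N.cap e) := by
  have := hf.1.2.2.2 e ζ h0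
  rw [htime e] at this
  exact this

include htime hf in
lemma fm_le_cap (e : Fin 5) {θ : ℝ} (h0 : 0 ≤ θ) : f.fminus e θ ≤ N.cap e := by
  rcases lt_or_ge θ 1 with h | h
  · rw [fm_early htime hf e h0 h]; exact (N.cap_pos e).le
  · have h' := hivq htime hf e (by linarith : (0:ℝ) ≤ θ - 1)
    rw [show θ - 1 + 1 = θ by ring] at h'
    rw [h']
    split
    · exact le_refl _
    · exact min_le_right _ _

/-! #### Graph structure -/

include htail in
lemma outE : N.outEdges 0 = {0, 1} ∧ N.outEdges 1 = {2} ∧ N.outEdges 2 = {3} ∧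
    N.outEdges 3 = {4} ∧ N.outEdges 4 = ∅ := by
  unfold Network.outEdges
  rw [htail]
  refine ⟨?_, ?_, ?_, ?_, ?_⟩ <;> decide

include hhead in
lemma inE : N.inEdges 0 = ∅ ∧ N.inEdges 1 = {0} ∧ N.inEdges 2 = {1} ∧
    N.inEdges 3 = {3} ∧ N.inEdges 4 = {2, 4} := by
  unfold Network.inEdges
  rw [hhead]
  refine ⟨?_, ?_, ?_, ?_, ?_⟩ <;> decide

include hcap in
lemma capv : N.cap 0 = 2 ∧ N.cap 1 = 2 ∧ N.cap 2 = 1 ∧ N.cap 3 = 1 ∧ N.cap 4 = 1 := by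
  rw [hcap]; exact ⟨rfl, rfl, rfl, rfl, rfl⟩

/-! #### Conservation -/

include htail hhead hsink hf in
lemma cons_s {θ : ℝ} (h0 : 0 ≤ θ) : f.fplus 0 θ + f.fplus 1 θ = N.u 0 θ := by
  have h := hf.1.1 0 (by rw [hsink]; decide) θ h0
  rw [(outE htail).1, (inE hhead).1] at h
  rw [Finset.sum_pair (by decide : (0 : Fin 5) ≠ 1), Finset.sum_empty] at h
  linarith

include htail hhead hsink hu hf in
lemma cons_v {θ : ℝ} (h0 : 0 ≤ θ) : f.fplus 2 θ = f.fminus 0 θ := by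
  have h := hf.1.1 1 (by rw [hsink]; decide) θ h0
  rw [(outE htail).2.1, (inE hhead).2.1] at h
  rw [Finset.sum_singleton, Finset.sum_singleton, hu] at h
  simp only [show ((1 : Fin 5) = 0) = False by simp, false_and, if_false] at h
  linarith

include htail hhead hsink hu hf in
lemma cons_w {θ : ℝ} (h0 : 0 ≤ θ) : f.fplus 3 θ = f.fminus 1 θ := by
  have h := hf.1.1 2 (by rw [hsink]; decide) θ h0
  rw [(outE htail).2.2.1, (inE hhead).2.2.1] at h
  rw [Finset.sum_singleton, Finset.sum_singleton, hu] at h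
  simp only [show ((2 : Fin 5) = 0) = False by simp, false_and, if_false] at h
  linarith

include htail hhead hsink hu hf in
lemma cons_x {θ : ℝ} (h0 : 0 ≤ θ) : f.fplus 4 θ = f.fminus 3 θ := by
  have h := hf.1.1 3 (by rw [hsink]; decide) θ h0
  rw [(outE htail).2.2.2.1, (inE hhead).2.2.2.1] at h
  rw [Finset.sum_singleton, Finset.sum_singleton, hu] at h
  simp only [show ((3 : Fin 5) = 0) = False by simp, false_and, if_false] at h
  linarith

include hu in
lemma u_le_two (w : Fin 5) (θ : ℝ) : N.u w θ ≤ 2 := by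
  rw [hu]; split <;> norm_num

include htail hhead hsink hu hf in
lemma fp01_le_two {θ : ℝ} (h0 : 0 ≤ θ) : f.fplus 0 θ ≤ 2 ∧ f.fplus 1 θ ≤ 2 := by
  have h := cons_s htail hhead hsink hf h0
  have h2 := u_le_two (U := U) hu 0 θ
  have := f.fplus_nonneg 0 θ
  have := f.fplus_nonneg 1 θ
  constructor <;> linarith


/-! #### Queue slope bounds -/

include htime in
lemma qUp (e : Fin 5) {s t C : ℝ} (hst : s ≤ t)
    (hC : ∀ ζ, s < ζ → ζ < t → f.fplus e ζ - f.fminus e (ζ + 1) ≤ C) :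
    q N f e t - q N f e s ≤ C * (t - s) := by
  rw [qdiff htime e s t, ← intervalIntegral.integral_sub (intFp e s t) (intFm1 e s t)]
  have hconst : (∫ _ in s..t, C) = C * (t - s) := by
    rw [intervalIntegral.integral_const, smul_eq_mul, mul_comm]
  rw [← hconst]
  exact intMonoIoo hst ((intFp e s t).sub (intFm1 e s t)) intervalIntegrable_const hC

include htime in
lemma qLow (e : Fin 5) {s t C : ℝ} (hst : s ≤ t)
    (hC : ∀ ζ, s < ζ → ζ < t → C ≤ f.fplus e ζ - f.fminus e (ζ + 1)) :
    C * (t - s) ≤ q N f e t - q N f e s := by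
  rw [qdiff htime e s t, ← intervalIntegral.integral_sub (intFp e s t) (intFm1 e s t)]
  have hconst : (∫ _ in s..t, C) = C * (t - s) := by
    rw [intervalIntegral.integral_const, smul_eq_mul, mul_comm]
  rw [← hconst]
  exact intMonoIoo hst intervalIntegrable_const ((intFp e s t).sub (intFm1 e s t)) hC

include htime hf in
lemma qzero_at_zero (e : Fin 5) : q N f e 0 = 0 := by
  unfold q queueOf
  rw [htime e, intervalIntegral.integral_same, zero_add]
  have : (∫ ζ in (0:ℝ)..1, f.fminus e ζ) = ∫ ζ in (0:ℝ)..1, (0:ℝ) :=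
    intCongrIoo zero_le_one (intFm e 0 1) intervalIntegrable_const
      (fun ζ h1 h2 => fm_early htime hf e (le_of_lt h1) h2)
  rw [this]
  simp

include htime hf in
lemma qnonneg (e : Fin 5) {θ : ℝ} (h0 : 0 ≤ θ) : 0 ≤ q N f e θ := by
  by_contra hneg
  push_neg at hneg
  obtain ⟨x, hxmem, hxP, hxafter⟩ := IDEx.lastP (P := fun ζ => 0 ≤ q N f e ζ)
    (isClosed_le continuous_const (qcont htime e)) h0 (le_of_eq (qzero_at_zero htime hf e).symm)
  have hxlt : x < θ := by
    rcases lt_or_eq_of_le hxmem.2 with h | h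
    · exact h
    · exfalso; rw [h] at hxP; linarith
  have hdec : 0 * (θ - x) ≤ q N f e θ - q N f e x := by
    apply qLow htime e (le_of_lt hxlt)
    intro ζ h1 h2
    have hζneg : q N f e ζ < 0 := by
      have := hxafter ζ h1 (le_of_lt h2)
      linarith [not_le.1 this]
    have h0ζ : (0:ℝ) ≤ ζ := le_trans hxmem.1 (le_of_lt h1)
    have hd := hivq htime hf e h0ζ
    rw [if_neg (by linarith : ¬ 0 < q N f e ζ)] at hd
    rw [hd]
    have := min_le_left (f.fplus e ζ) (N.cap e)
    linarith
  rw [zero_mul] at hdec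
  linarith

include htime hf in
lemma qzero_of_cap (e : Fin 5) (hcple : ∀ ζ : ℝ, 0 ≤ ζ → f.fplus e ζ ≤ N.cap e)
    {θ : ℝ} (h0 : 0 ≤ θ) : q N f e θ = 0 := by
  refine le_antisymm ?_ (qnonneg htime hf e h0)
  by_contra hpos
  push_neg at hpos
  obtain ⟨x, hxmem, hxP, hxafter⟩ := IDEx.lastP (P := fun ζ => q N f e ζ ≤ 0)
    (isClosed_le (qcont htime e) continuous_const) h0 (le_of_eq (qzero_at_zero htime hf e))
  have hxlt : x < θ := by
    rcases lt_or_eq_of_le hxmem.2 with h | h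
    · exact h
    · exfalso; rw [h] at hxP; linarith
  have hdec : q N f e θ - q N f e x ≤ 0 * (θ - x) := by
    apply qUp htime e (le_of_lt hxlt)
    intro ζ h1 h2
    have hζpos : 0 < q N f e ζ := by
      have := hxafter ζ h1 (le_of_lt h2)
      linarith [not_le.1 this]
    have h0ζ : (0:ℝ) ≤ ζ := le_trans hxmem.1 (le_of_lt h1)
    have := hivq htime hf e h0ζ
    rw [if_pos hζpos] at this
    rw [this]
    linarith [hcple ζ h0ζ]
  rw [zero_mul] at hdec
  linarith

include htail hhead hcap htime hsink hu hf in
lemma q014_zero {θ : ℝ} (h0 : 0 ≤ θ) :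
    q N f 0 θ = 0 ∧ q N f 1 θ = 0 ∧ q N f 4 θ = 0 := by
  refine ⟨?_, ?_, ?_⟩
  · exact qzero_of_cap htime hf 0
      (fun ζ hζ => by rw [(capv hcap).1]; exact (fp01_le_two htail hhead hsink hu hf hζ).1) h0
  · exact qzero_of_cap htime hf 1
      (fun ζ hζ => by rw [(capv hcap).2.1]; exact (fp01_le_two htail hhead hsink hu hf hζ).2) h0
  · apply qzero_of_cap htime hf 4 (fun ζ hζ => ?_) h0
    rw [(capv hcap).2.2.2.2, cons_x htail hhead hsink hu hf hζ]
    have := fm_le_cap htime hf 3 hζ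
    rw [(capv hcap).2.2.2.1] at this
    exact this

/-! #### Delay identities -/

include htail hhead hcap htime hsink hu hf in
lemma delay0 {ζ : ℝ} (h0 : 0 ≤ ζ) : f.fminus 0 (ζ + 1) = f.fplus 0 ζ := by
  have h := hivq htime hf 0 h0
  have hq : ¬ 0 < q N f 0 ζ := by
    rw [(q014_zero htail hhead hcap htime hsink hu hf h0).1]; exact lt_irrefl 0
  rw [if_neg hq, (capv hcap).1] at h
  rw [h, min_eq_left (fp01_le_two htail hhead hsink hu hf h0).1]

include htail hhead hcap htime hsink hu hf in
lemma delay1 {ζ : ℝ} (h0 : 0 ≤ ζ) : f.fminus 1 (ζ + 1) = f.fplus 1 ζ := by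
  have h := hivq htime hf 1 h0
  have hq : ¬ 0 < q N f 1 ζ := by
    rw [(q014_zero htail hhead hcap htime hsink hu hf h0).2.1]; exact lt_irrefl 0
  rw [if_neg hq, (capv hcap).2.1] at h
  rw [h, min_eq_left (fp01_le_two htail hhead hsink hu hf h0).2]

include htail hhead hcap htime hsink hu hf in
lemma fp2_delay {ζ : ℝ} (h0 : 0 ≤ ζ) : f.fplus 2 (ζ + 1) = f.fplus 0 ζ := by
  rw [cons_v htail hhead hsink hu hf (by linarith : (0:ℝ) ≤ ζ + 1),
    delay0 htail hhead hcap htime hsink hu hf h0]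

include htail hhead hcap htime hsink hu hf in
lemma fp3_delay {ζ : ℝ} (h0 : 0 ≤ ζ) : f.fplus 3 (ζ + 1) = f.fplus 1 ζ := by
  rw [cons_w htail hhead hsink hu hf (by linarith : (0:ℝ) ≤ ζ + 1),
    delay1 htail hhead hcap htime hsink hu hf h0]

include htail hhead htime hsink hu hf in
lemma fp23_early {θ : ℝ} (h0 : 0 ≤ θ) (h1 : θ < 1) :
    f.fplus 2 θ = 0 ∧ f.fplus 3 θ = 0 := by
  constructor
  · rw [cons_v htail hhead hsink hu hf h0]; exact fm_early htime hf 0 h0 h1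
  · rw [cons_w htail hhead hsink hu hf h0]; exact fm_early htime hf 1 h0 h1

include htail hhead hcap htime hsink hu hf in
lemma fp_le_two (e : Fin 5) {θ : ℝ} (h0 : 0 ≤ θ) : f.fplus e θ ≤ 2 := by
  fin_cases e
  · exact (fp01_le_two htail hhead hsink hu hf h0).1
  · exact (fp01_le_two htail hhead hsink hu hf h0).2
  · show f.fplus 2 θ ≤ 2
    rw [cons_v htail hhead hsink hu hf h0]
    have := fm_le_cap htime hf 0 h0; rw [(capv hcap).1] at this; exact this
  · show f.fplus 3 θ ≤ 2
    rw [cons_w htail hhead hsink hu hf h0]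
    have := fm_le_cap htime hf 1 h0; rw [(capv hcap).2.1] at this; exact this
  · show f.fplus 4 θ ≤ 2
    rw [cons_x htail hhead hsink hu hf h0]
    have := fm_le_cap htime hf 3 h0
    rw [(capv hcap).2.2.2.1] at this; linarith

include htail hhead hcap htime hsink hu hf in
lemma q23_early {θ : ℝ} (h0 : 0 ≤ θ) (h1 : θ ≤ 1) :
    q N f 2 θ = 0 ∧ q N f 3 θ = 0 := by
  have key : ∀ e : Fin 5, (e = 2 ∨ e = 3) → q N f e θ = 0 := by
    intro e he
    refine le_antisymm ?_ (qnonneg htime hf e h0)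
    have hd : q N f e θ - q N f e 0 ≤ 0 * (θ - 0) := by
      apply qUp htime e h0
      intro ζ hζ1 hζ2
      have hze : f.fplus e ζ = 0 := by
        rcases he with rfl | rfl
        · exact (fp23_early htail hhead htime hsink hu hf (le_of_lt hζ1) (by linarith)).1
        · exact (fp23_early htail hhead htime hsink hu hf (le_of_lt hζ1) (by linarith)).2
      rw [hze]
      have := f.fminus_nonneg e (ζ + 1)
      linarith
    rw [qzero_at_zero htime hf e] at hd
    rw [zero_mul] at hd
    linarith
  exact ⟨key 2 (Or.inl rfl), key 3 (Or.inr rfl)⟩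


/-! #### Walks and labels -/

include htail in
lemma walk4 (L : List (Fin 5)) : IsWalk N.tail N.head 4 4 L ↔ L = [] := by
  cases L with
  | nil => simp [IsWalk]
  | cons e L =>
    simp only [IsWalk]
    constructor
    · rintro ⟨he, -⟩
      exfalso
      rw [htail] at he
      have : ∀ x : Fin 5, ![(0:Fin 5),0,1,2,3] x = 4 → False := by decide
      exact this e he
    · intro h; cases h

include htail hhead in
lemma walk3 (L : List (Fin 5)) : IsWalk N.tail N.head 3 4 L ↔ L = [4] := by
  cases L with
  | nil => simp only [IsWalk]; constructor <;> (intro h; exact absurd h (by decide))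
  | cons e L =>
    simp only [IsWalk]
    constructor
    · rintro ⟨he, hw⟩
      rw [htail] at he
      have he4 : e = 4 := by
        have : ∀ x : Fin 5, ![(0:Fin 5),0,1,2,3] x = 3 → x = 4 := by decide
        exact this e he
      subst he4
      rw [show N.head 4 = 4 by rw [hhead]; exact rfl] at hw
      rw [walk4 htail L] at hw
      rw [hw]
    · intro h
      injection h with h1 h2
      subst h1; subst h2
      refine ⟨by rw [htail]; exact rfl, ?_⟩
      rw [show N.head _ = 4 by rw [hhead]; exact rfl]
      exact (walk4 htail []).2 rfl

include htail hhead in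
lemma walk1 (L : List (Fin 5)) : IsWalk N.tail N.head 1 4 L ↔ L = [2] := by
  cases L with
  | nil => simp only [IsWalk]; constructor <;> (intro h; exact absurd h (by decide))
  | cons e L =>
    simp only [IsWalk]
    constructor
    · rintro ⟨he, hw⟩
      rw [htail] at he
      have he2 : e = 2 := by
        have : ∀ x : Fin 5, ![(0:Fin 5),0,1,2,3] x = 1 → x = 2 := by decide
        exact this e he
      subst he2
      rw [show N.head 2 = 4 by rw [hhead]; exact rfl] at hw
      rw [walk4 htail L] at hw
      rw [hw]
    · intro h
      injection h with h1 h2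
      subst h1; subst h2
      refine ⟨by rw [htail]; exact rfl, ?_⟩
      rw [show N.head _ = 4 by rw [hhead]; exact rfl]
      exact (walk4 htail []).2 rfl

include htail hhead in
lemma walk2 (L : List (Fin 5)) : IsWalk N.tail N.head 2 4 L ↔ L = [3, 4] := by
  cases L with
  | nil => simp only [IsWalk]; constructor <;> (intro h; exact absurd h (by decide))
  | cons e L =>
    simp only [IsWalk]
    constructor
    · rintro ⟨he, hw⟩
      rw [htail] at he
      have he3 : e = 3 := by
        have : ∀ x : Fin 5, ![(0:Fin 5),0,1,2,3] x = 2 → x = 3 := by decide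
        exact this e he
      subst he3
      rw [show N.head 3 = 3 by rw [hhead]; exact rfl] at hw
      rw [walk3 htail hhead L] at hw
      rw [hw]
    · intro h
      injection h with h1 h2
      subst h1; subst h2
      refine ⟨by rw [htail]; exact rfl, ?_⟩
      rw [show N.head 3 = 3 by rw [hhead]; exact rfl]
      exact (walk3 htail hhead [4]).2 rfl

include htail hhead in
lemma walk0 (L : List (Fin 5)) :
    IsWalk N.tail N.head 0 4 L ↔ L = [0, 2] ∨ L = [1, 3, 4] := by
  cases L with
  | nil =>
    simp only [IsWalk]
    constructor
    · intro h; exact absurd h (by decide)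
    · rintro (h | h) <;> cases h
  | cons e L =>
    simp only [IsWalk]
    constructor
    · rintro ⟨he, hw⟩
      rw [htail] at he
      have he01 : e = 0 ∨ e = 1 := by
        have : ∀ x : Fin 5, ![(0:Fin 5),0,1,2,3] x = 0 → x = 0 ∨ x = 1 := by decide
        exact this e he
      rcases he01 with rfl | rfl
      · rw [show N.head 0 = 1 by rw [hhead]; exact rfl] at hw
        rw [walk1 htail hhead L] at hw
        left; rw [hw]
      · rw [show N.head 1 = 2 by rw [hhead]; exact rfl] at hw
        rw [walk2 htail hhead L] at hw
        right; rw [hw]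
    · rintro (h | h) <;> (injection h with h1 h2; subst h1; subst h2)
      · refine ⟨by rw [htail]; exact rfl, ?_⟩
        rw [show N.head 0 = 1 by rw [hhead]; exact rfl]
        exact (walk1 htail hhead [2]).2 rfl
      · refine ⟨by rw [htail]; exact rfl, ?_⟩
        rw [show N.head 1 = 2 by rw [hhead]; exact rfl]
        exact (walk2 htail hhead [3,4]).2 rfl

include htail hhead hcap htime hsink hu hf in
lemma ctv {θ : ℝ} (h0 : 0 ≤ θ) :
    ctimeOf N f.fplus f.fminus 0 θ = 1 ∧ ctimeOf N f.fplus f.fminus 1 θ = 1 ∧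
    ctimeOf N f.fplus f.fminus 2 θ = 1 + q N f 2 θ ∧
    ctimeOf N f.fplus f.fminus 3 θ = 1 + q N f 3 θ ∧
    ctimeOf N f.fplus f.fminus 4 θ = 1 := by
  obtain ⟨hq0, hq1, hq4⟩ := q014_zero htail hhead hcap htime hsink hu hf h0
  unfold ctimeOf
  rw [htime 0, htime 1, htime 2, htime 3, htime 4,
    (capv hcap).1, (capv hcap).2.1, (capv hcap).2.2.1, (capv hcap).2.2.2.1,
    (capv hcap).2.2.2.2]
  unfold q at hq0 hq1 hq4
  rw [hq0, hq1, hq4]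
  norm_num
  constructor <;> rfl

include htail hhead hcap htime hsink hu hf in
lemma label_vals {θ : ℝ} (h0 : 0 ≤ θ) :
    labelOf N f.fplus f.fminus 1 θ = 1 + q N f 2 θ ∧
    labelOf N f.fplus f.fminus 2 θ = 2 + q N f 3 θ ∧
    labelOf N f.fplus f.fminus 0 θ = min (2 + q N f 2 θ) (3 + q N f 3 θ) := by
  obtain ⟨hc0, hc1, hc2, hc3, hc4⟩ := ctv htail hhead hcap htime hsink hu hf h0
  refine ⟨?_, ?_, ?_⟩
  · unfold labelOf
    rw [hsink]
    have hset : {r : ℝ | ∃ L : List (Fin 5), IsWalk N.tail N.head 1 4 L ∧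
        r = (L.map (fun e => ctimeOf N f.fplus f.fminus e θ)).sum}
        = {ctimeOf N f.fplus f.fminus 2 θ} := by
      ext r
      simp only [Set.mem_setOf_eq, Set.mem_singleton_iff]
      constructor
      · rintro ⟨L, hL, rfl⟩
        rw [walk1 htail hhead L] at hL
        subst hL
        simp
      · intro h
        exact ⟨[2], (walk1 htail hhead [2]).2 rfl, by simp [h]⟩
    rw [hset, csInf_singleton, hc2]
  · unfold labelOf
    rw [hsink]
    have hset : {r : ℝ | ∃ L : List (Fin 5), IsWalk N.tail N.head 2 4 L ∧
        r = (L.map (fun e => ctimeOf N f.fplus f.fminus e θ)).sum}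
        = {ctimeOf N f.fplus f.fminus 3 θ + ctimeOf N f.fplus f.fminus 4 θ} := by
      ext r
      simp only [Set.mem_setOf_eq, Set.mem_singleton_iff]
      constructor
      · rintro ⟨L, hL, rfl⟩
        rw [walk2 htail hhead L] at hL
        subst hL
        simp
      · intro h
        exact ⟨[3, 4], (walk2 htail hhead [3,4]).2 rfl, by simp [h]⟩
    rw [hset, csInf_singleton, hc3, hc4]
    ring
  · unfold labelOf
    rw [hsink]
    have hset : {r : ℝ | ∃ L : List (Fin 5), IsWalk N.tail N.head 0 4 L ∧
        r = (L.map (fun e => ctimeOf N f.fplus f.fminus e θ)).sum}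
        = {ctimeOf N f.fplus f.fminus 0 θ + ctimeOf N f.fplus f.fminus 2 θ,
           ctimeOf N f.fplus f.fminus 1 θ + (ctimeOf N f.fplus f.fminus 3 θ
             + ctimeOf N f.fplus f.fminus 4 θ)} := by
      ext r
      simp only [Set.mem_setOf_eq, Set.mem_insert_iff, Set.mem_singleton_iff]
      constructor
      · rintro ⟨L, hL, rfl⟩
        rw [walk0 htail hhead L] at hL
        rcases hL with rfl | rfl
        · left; simp
        · right; simp
      · rintro (h | h)
        · exact ⟨[0, 2], (walk0 htail hhead [0,2]).2 (Or.inl rfl), by simp [h]⟩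
        · exact ⟨[1, 3, 4], (walk0 htail hhead [1,3,4]).2 (Or.inr rfl), by simp [h]⟩
    rw [hset, csInf_pair, hc0, hc1, hc2, hc3, hc4]
    congr 1 <;> ring

include htail hhead hcap htime hsink hu hf in
lemma act0_iff {θ : ℝ} (h0 : 0 ≤ θ) :
    ActiveOf N f.fplus f.fminus 0 θ ↔ q N f 2 θ ≤ 1 + q N f 3 θ := by
  obtain ⟨hl1, hl2, hl0⟩ := label_vals htail hhead hcap htime hsink hu hf h0
  obtain ⟨hc0, -, -, -, -⟩ := ctv htail hhead hcap htime hsink hu hf h0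
  unfold ActiveOf
  rw [show N.tail 0 = 0 by rw [htail]; exact rfl, show N.head 0 = 1 by rw [hhead]; exact rfl, hl0, hl1, hc0]
  rw [show (1:ℝ) + (1 + q N f 2 θ) = 2 + q N f 2 θ by ring]
  rw [min_eq_left_iff]
  constructor <;> intro h <;> linarith

include htail hhead hcap htime hsink hu hf in
lemma act1_iff {θ : ℝ} (h0 : 0 ≤ θ) :
    ActiveOf N f.fplus f.fminus 1 θ ↔ 1 + q N f 3 θ ≤ q N f 2 θ := by
  obtain ⟨hl1, hl2, hl0⟩ := label_vals htail hhead hcap htime hsink hu hf h0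
  obtain ⟨-, hc1, -, -, -⟩ := ctv htail hhead hcap htime hsink hu hf h0
  unfold ActiveOf
  rw [show N.tail 1 = 0 by rw [htail]; exact rfl, show N.head 1 = 2 by rw [hhead]; exact rfl, hl0, hl2, hc1]
  rw [show (1:ℝ) + (2 + q N f 3 θ) = 3 + q N f 3 θ by ring]
  rw [min_eq_right_iff]
  constructor <;> intro h <;> linarith

include htail hhead hcap htime hsink hu hf in
lemma noflow0 {θ : ℝ} (h0 : 0 ≤ θ) (h : 1 + q N f 3 θ < q N f 2 θ) : f.fplus 0 θ = 0 := by
  by_contra hne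
  have hpos : 0 < f.fplus 0 θ := lt_of_le_of_ne (f.fplus_nonneg 0 θ) (Ne.symm hne)
  have := (act0_iff htail hhead hcap htime hsink hu hf h0).1 (hf.2 0 θ h0 hpos)
  linarith

include htail hhead hcap htime hsink hu hf in
lemma noflow1 {θ : ℝ} (h0 : 0 ≤ θ) (h : q N f 2 θ < 1 + q N f 3 θ) : f.fplus 1 θ = 0 := by
  by_contra hne
  have hpos : 0 < f.fplus 1 θ := lt_of_le_of_ne (f.fplus_nonneg 1 θ) (Ne.symm hne)
  have := (act1_iff htail hhead hcap htime hsink hu hf h0).1 (hf.2 1 θ h0 hpos)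
  linarith

include htail hhead hcap htime hsink hu hf in
lemma posflow0 {θ : ℝ} (h0 : 0 ≤ θ) (h : 0 < f.fplus 0 θ) :
    q N f 2 θ ≤ 1 + q N f 3 θ :=
  (act0_iff htail hhead hcap htime hsink hu hf h0).1 (hf.2 0 θ h0 h)

include htail hhead hcap htime hsink hu hf in
lemma posflow1 {θ : ℝ} (h0 : 0 ≤ θ) (h : 0 < f.fplus 1 θ) :
    1 + q N f 3 θ ≤ q N f 2 θ :=
  (act1_iff htail hhead hcap htime hsink hu hf h0).1 (hf.2 1 θ h0 h)


/-! #### Slope facts for the queue edges -/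

include htail hhead hcap htime hsink hu hf in
lemma slope_le_one (e : Fin 5) (he : e = 2 ∨ e = 3) {ζ : ℝ} (h0 : 0 ≤ ζ) :
    f.fplus e ζ - f.fminus e (ζ + 1) ≤ 1 := by
  have hfp := fp_le_two htail hhead hcap htime hsink hu hf (e := e) h0
  have hcape : N.cap e = 1 := by
    rcases he with rfl | rfl
    · exact (capv hcap).2.2.1
    · exact (capv hcap).2.2.2.1
  have h := hivq htime hf e h0
  rw [hcape] at h
  rw [h]
  split
  · linarith
  · rcases le_total (f.fplus e ζ) 1 with hle | hle
    · rw [min_eq_left hle]; linarith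
    · rw [min_eq_right hle]; linarith

include htail hhead hcap htime hsink hu hf in
lemma fm_pos_one (e : Fin 5) (he : e = 2 ∨ e = 3) {ζ : ℝ} (h0 : 0 ≤ ζ)
    (hq : 0 < q N f e ζ) : f.fminus e (ζ + 1) = 1 := by
  have hcape : N.cap e = 1 := by
    rcases he with rfl | rfl
    · exact (capv hcap).2.2.1
    · exact (capv hcap).2.2.2.1
  have h := hivq htime hf e h0
  rw [if_pos hq, hcape] at h
  exact h

include htail hhead hcap htime hsink hu hf in
lemma qslope_cap (e : Fin 5) (he : e = 2 ∨ e = 3) {s t : ℝ} (h0 : 0 ≤ s) (hst : s ≤ t) :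
    q N f e t ≤ q N f e s + (t - s) := by
  have := qUp (f := f) htime e (C := 1) hst (fun ζ h1 h2 =>
    slope_le_one htail hhead hcap htime hsink hu hf e he (le_trans h0 (le_of_lt h1)))
  linarith

include htail hhead hcap htime hsink hu hf in
lemma fp23_sum_le {ζ : ℝ} (h0 : 0 ≤ ζ) : f.fplus 2 ζ + f.fplus 3 ζ ≤ 2 := by
  rcases lt_or_ge ζ 1 with h1 | h1
  · obtain ⟨h2, h3⟩ := fp23_early htail hhead htime hsink hu hf h0 h1
    rw [h2, h3]; norm_num
  · have h2 : f.fplus 2 ζ = f.fplus 0 (ζ - 1) := by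
      have := fp2_delay htail hhead hcap htime hsink hu hf (by linarith : (0:ℝ) ≤ ζ - 1)
      rw [show ζ - 1 + 1 = ζ by ring] at this
      exact this
    have h3 : f.fplus 3 ζ = f.fplus 1 (ζ - 1) := by
      have := fp3_delay htail hhead hcap htime hsink hu hf (by linarith : (0:ℝ) ≤ ζ - 1)
      rw [show ζ - 1 + 1 = ζ by ring] at this
      exact this
    rw [h2, h3, cons_s htail hhead hsink hf (by linarith : (0:ℝ) ≤ ζ - 1)]
    exact u_le_two (U := U) hu 0 (ζ - 1)

/-! #### Global queue bounds -/

include htail hhead hcap htime hsink hu hf in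
lemma global_bounds {θ : ℝ} (h0 : 0 ≤ θ) : q N f 2 θ ≤ 3 ∧ q N f 3 θ ≤ 2 := by
  classical
  have hQcont : Continuous (fun ζ => q N f 2 ζ + q N f 3 ζ) :=
    (qcont htime 2).add (qcont htime 3)
  obtain ⟨θs, hθsmem, hθsmax⟩ :=
    isCompact_Icc.exists_isMaxOn (Set.nonempty_Icc.2 h0) hQcont.continuousOn
  have hmax : ∀ y ∈ Set.Icc 0 θ, q N f 2 y + q N f 3 y ≤ q N f 2 θs + q N f 3 θs :=
    fun y hy => hθsmax hy
  have hQ1 : ∀ ζ : ℝ, 0 ≤ ζ → ζ ≤ 1 → q N f 2 ζ = 0 ∧ q N f 3 ζ = 0 := fun ζ hζ0 hζ1 =>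
    q23_early htail hhead hcap htime hsink hu hf hζ0 hζ1
  have hSnn : 0 ≤ q N f 2 θs + q N f 3 θs := by
    obtain ⟨ha, hb⟩ := hQ1 0 le_rfl zero_le_one
    have := hmax 0 (Set.left_mem_Icc.2 h0)
    linarith
  have hq3nn : ∀ ζ : ℝ, 0 ≤ ζ → 0 ≤ q N f 3 ζ := fun ζ hζ => qnonneg htime hf 3 hζ
  have hq2nn : ∀ ζ : ℝ, 0 ≤ ζ → 0 ≤ q N f 2 ζ := fun ζ hζ => qnonneg htime hf 2 hζ
  -- Claim A
  have claimA : ∀ θh, θh ∈ Set.Icc 0 θ →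
      q N f 2 θh ≤ (q N f 2 θs + q N f 3 θs + 3) / 2 := by
    intro θh hθh
    rcases le_or_gt θh 1 with h1 | h1
    · rw [(hQ1 θh hθh.1 h1).1]; linarith
    · have hP1 : q N f 2 1 - (1 + q N f 3 1) ≤ 0 := by
        obtain ⟨ha, hb⟩ := hQ1 1 zero_le_one le_rfl
        rw [ha, hb]; norm_num
      obtain ⟨x, hxmem, hxP, hxafter⟩ := IDEx.lastP
        (P := fun ζ => q N f 2 ζ - (1 + q N f 3 ζ) ≤ 0)
        (isClosed_le (((qcont htime 2)).sub (continuous_const.add (qcont htime 3)))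
          continuous_const) (le_of_lt h1) hP1
      have hx0 : (0:ℝ) ≤ x := le_trans zero_le_one hxmem.1
      have hxθ : x ∈ Set.Icc (0:ℝ) θ := ⟨hx0, le_trans hxmem.2 hθh.2⟩
      rcases eq_or_lt_of_le hxmem.2 with heq | hlt
      · rw [heq] at hxP
        have := hmax θh ⟨le_trans zero_le_one (le_of_lt h1), hθh.2⟩
        have := hq3nn θh (by linarith)
        linarith
      · have hstrict : ∀ ζ, x < ζ → ζ ≤ θh → 0 < q N f 2 ζ - (1 + q N f 3 ζ) := by
          intro ζ hζ1 hζ2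
          have := hxafter ζ hζ1 hζ2
          push_neg at this
          linarith
        have heqx : q N f 2 x = 1 + q N f 3 x := by
          have h1' := IDEx.rightLimit (g := fun ζ => q N f 2 ζ - (1 + q N f 3 ζ))
            (((qcont htime 2)).sub (continuous_const.add (qcont htime 3))) hlt hstrict
          linarith
        have hq3x : q N f 3 x ≤ (q N f 2 θs + q N f 3 θs - 1) / 2 := by
          have := hmax x hxθ
          linarith
        rcases le_or_gt θh (x + 1) with hcase | hcase
        · have := qslope_cap htail hhead hcap htime hsink hu hf 2 (Or.inl rfl) hx0
            (le_of_lt hlt)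
          linarith
        · have hstep1 : q N f 2 (x+1) ≤ q N f 2 x + 1 := by
            have := qslope_cap htail hhead hcap htime hsink hu hf 2 (Or.inl rfl) hx0
              (by linarith : x ≤ x + 1)
            linarith
          have hdec : q N f 2 θh - q N f 2 (x+1) ≤ 0 * (θh - (x+1)) := by
            apply qUp htime 2 (le_of_lt hcase)
            intro ζ hζ1 hζ2
            have hζ0 : (0:ℝ) ≤ ζ - 1 := by linarith
            have hfp20 : f.fplus 2 ζ = 0 := by
              have hd := fp2_delay htail hhead hcap htime hsink hu hf hζ0
              rw [show ζ - 1 + 1 = ζ by ring] at hd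
              rw [hd]
              apply noflow0 htail hhead hcap htime hsink hu hf hζ0
              have := hstrict (ζ - 1) (by linarith) (by linarith)
              linarith
            rw [hfp20]
            linarith [f.fminus_nonneg 2 (ζ + 1)]
          rw [zero_mul] at hdec
          linarith
  -- Claim B
  have claimB : ∀ θh, θh ∈ Set.Icc 0 θ →
      q N f 3 θh ≤ (q N f 2 θs + q N f 3 θs + 1) / 2 := by
    intro θh hθh
    rcases le_or_gt θh 1 with h1 | h1
    · rw [(hQ1 θh hθh.1 h1).2]; linarith
    · by_cases hA : (Set.Icc (0:ℝ) θh ∩ {ζ | 1 + q N f 3 ζ - q N f 2 ζ ≤ 0}).Nonempty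
      · obtain ⟨x, hxmem, hxP, hxafter⟩ := IDEx.lastP2
          (P := fun ζ => 1 + q N f 3 ζ - q N f 2 ζ ≤ 0)
          (isClosed_le ((continuous_const.add (qcont htime 3)).sub (qcont htime 2))
            continuous_const) hA
        have hx0 : (0:ℝ) ≤ x := hxmem.1
        have hxθ : x ∈ Set.Icc (0:ℝ) θ := ⟨hx0, le_trans hxmem.2 hθh.2⟩
        rcases eq_or_lt_of_le hxmem.2 with heq | hlt
        · rw [heq] at hxP
          have := hmax θh ⟨hθh.1, hθh.2⟩
          linarith
        · have hstrict : ∀ ζ, x < ζ → ζ ≤ θh → 0 < 1 + q N f 3 ζ - q N f 2 ζ := by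
            intro ζ hζ1 hζ2
            have := hxafter ζ hζ1 hζ2
            push_neg at this
            linarith
          have heqx : q N f 2 x = 1 + q N f 3 x := by
            have h1' := IDEx.rightLimit (g := fun ζ => 1 + q N f 3 ζ - q N f 2 ζ)
              ((continuous_const.add (qcont htime 3)).sub (qcont htime 2)) hlt hstrict
            linarith
          have hq3x : q N f 3 x ≤ (q N f 2 θs + q N f 3 θs - 1) / 2 := by
            have := hmax x hxθ
            linarith
          rcases le_or_gt θh (x + 1) with hcase | hcase
          · have := qslope_cap htail hhead hcap htime hsink hu hf 3 (Or.inr rfl) hx0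
              (le_of_lt hlt)
            linarith
          · have hstep1 : q N f 3 (x+1) ≤ q N f 3 x + 1 := by
              have := qslope_cap htail hhead hcap htime hsink hu hf 3 (Or.inr rfl) hx0
                (by linarith : x ≤ x + 1)
              linarith
            have hdec : q N f 3 θh - q N f 3 (x+1) ≤ 0 * (θh - (x+1)) := by
              apply qUp htime 3 (le_of_lt hcase)
              intro ζ hζ1 hζ2
              have hζ0 : (0:ℝ) ≤ ζ - 1 := by linarith
              have hfp30 : f.fplus 3 ζ = 0 := by
                have hd := fp3_delay htail hhead hcap htime hsink hu hf hζ0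
                rw [show ζ - 1 + 1 = ζ by ring] at hd
                rw [hd]
                apply noflow1 htail hhead hcap htime hsink hu hf hζ0
                have := hstrict (ζ - 1) (by linarith) (by linarith)
                linarith
              rw [hfp30]
              linarith [f.fminus_nonneg 3 (ζ + 1)]
            rw [zero_mul] at hdec
            linarith
      · have hnof : ∀ ζ, 0 ≤ ζ → ζ ≤ θh → f.fplus 1 ζ = 0 := by
          intro ζ hζ0 hζθ
          apply noflow1 htail hhead hcap htime hsink hu hf hζ0
          by_contra hcon
          push_neg at hcon
          exact hA ⟨ζ, ⟨hζ0, hζθ⟩, by simp only [Set.mem_setOf_eq]; linarith⟩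
        have hdec : q N f 3 θh - q N f 3 0 ≤ 0 * (θh - 0) := by
          apply qUp htime 3 (le_trans zero_le_one (le_of_lt h1))
          intro ζ hζ1 hζ2
          have hfp30 : f.fplus 3 ζ = 0 := by
            rcases lt_or_ge ζ 1 with hζlt | hζge
            · exact (fp23_early htail hhead htime hsink hu hf (le_of_lt hζ1) hζlt).2
            · have hd := fp3_delay htail hhead hcap htime hsink hu hf
                (by linarith : (0:ℝ) ≤ ζ - 1)
              rw [show ζ - 1 + 1 = ζ by ring] at hd
              rw [hd]
              exact hnof (ζ - 1) (by linarith) (by linarith)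
          rw [hfp30]
          linarith [f.fminus_nonneg 3 (ζ + 1)]
        have hq30 : q N f 3 0 = 0 := qzero_at_zero htime hf 3
        rw [hq30, zero_mul] at hdec
        linarith
  -- Claim C
  have claimC : q N f 2 θs + q N f 3 θs ≤ 3 := by
    by_contra hS3
    push_neg at hS3
    have hθs1 : 1 < θs := by
      by_contra hle
      push_neg at hle
      obtain ⟨ha, hb⟩ := hQ1 θs hθsmem.1 hle
      rw [ha, hb] at hS3
      linarith
    have hP1 : (fun ζ => q N f 2 ζ = 0 ∨ q N f 3 ζ = 0) 1 :=
      Or.inl (hQ1 1 zero_le_one le_rfl).1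
    obtain ⟨x, hxmem, hxP, hxafter⟩ := IDEx.lastP
      (P := fun ζ => q N f 2 ζ = 0 ∨ q N f 3 ζ = 0)
      (((isClosed_eq (qcont htime 2) continuous_const).union
        (isClosed_eq (qcont htime 3) continuous_const))) (le_of_lt hθs1) hP1
    have hx0 : (0:ℝ) ≤ x := le_trans zero_le_one hxmem.1
    have hxθ : x ∈ Set.Icc (0:ℝ) θ := ⟨hx0, le_trans hxmem.2 hθsmem.2⟩
    have hQxS : q N f 2 θs + q N f 3 θs ≤ q N f 2 x + q N f 3 x := by
      rcases eq_or_lt_of_le hxmem.2 with heq | hlt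
      · rw [heq]
      · have hpos : ∀ ζ, x < ζ → ζ ≤ θs → 0 < q N f 2 ζ ∧ 0 < q N f 3 ζ := by
          intro ζ h1 h2
          have := hxafter ζ h1 h2
          push_neg at this
          have hζ0 : (0:ℝ) ≤ ζ := le_trans hx0 (le_of_lt h1)
          exact ⟨lt_of_le_of_ne (hq2nn ζ hζ0) (Ne.symm this.1),
            lt_of_le_of_ne (hq3nn ζ hζ0) (Ne.symm this.2)⟩
        have h2d := qdiff (f := f) htime 2 x θs
        have h3d := qdiff (f := f) htime 3 x θs
        have hfm2 : (∫ ζ in x..θs, f.fminus 2 (ζ + 1)) = ∫ ζ in x..θs, (1:ℝ) :=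
          intCongrIoo (le_of_lt hlt) (intFm1 2 x θs) intervalIntegrable_const
            (fun ζ h1 h2 => fm_pos_one htail hhead hcap htime hsink hu hf 2 (Or.inl rfl)
              (le_trans hx0 (le_of_lt h1)) (hpos ζ h1 (le_of_lt h2)).1)
        have hfm3 : (∫ ζ in x..θs, f.fminus 3 (ζ + 1)) = ∫ ζ in x..θs, (1:ℝ) :=
          intCongrIoo (le_of_lt hlt) (intFm1 3 x θs) intervalIntegrable_const
            (fun ζ h1 h2 => fm_pos_one htail hhead hcap htime hsink hu hf 3 (Or.inr rfl)
              (le_trans hx0 (le_of_lt h1)) (hpos ζ h1 (le_of_lt h2)).2)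
        have hfpsum : (∫ ζ in x..θs, f.fplus 2 ζ) + (∫ ζ in x..θs, f.fplus 3 ζ)
            ≤ ∫ ζ in x..θs, (2:ℝ) := by
          rw [← intervalIntegral.integral_add (intFp 2 x θs) (intFp 3 x θs)]
          exact intMonoIoo (le_of_lt hlt) ((intFp 2 x θs).add (intFp 3 x θs))
            intervalIntegrable_const
            (fun ζ h1 h2 => fp23_sum_le htail hhead hcap htime hsink hu hf
              (le_trans hx0 (le_of_lt h1)))
        rw [intervalIntegral.integral_const, smul_eq_mul, mul_one] at hfm2 hfm3
        rw [intervalIntegral.integral_const, smul_eq_mul] at hfpsum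
        linarith
    rcases hxP with hq20 | hq30
    · have := claimB x hxθ
      rw [hq20] at hQxS
      linarith
    · have := claimA x hxθ
      rw [hq30] at hQxS
      linarith
  constructor
  · have := claimA θ (Set.right_mem_Icc.2 h0)
    linarith
  · have := claimB θ (Set.right_mem_Icc.2 h0)
    linarith


/-! #### Integrals of a.e.-constant functions -/

lemma locInt {g : ℝ → ℝ} (hg : ∀ a b : ℝ, IntervalIntegrable g volume a b) :
    MeasureTheory.LocallyIntegrable g volume := by
  intro x
  refine ⟨Set.Icc (x - 1) (x + 1), Icc_mem_nhds (by linarith) (by linarith), ?_⟩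
  exact (intervalIntegrable_iff_integrableOn_Icc_of_le (by linarith)).1 (hg _ _)

lemma intOfAE {g : ℝ → ℝ} {a b s t c : ℝ}
    (h : ∀ᵐ θ ∂(volume.restrict (Set.Ioo a b)), g θ = c)
    (has : a ≤ s) (hst : s ≤ t) (htb : t ≤ b)
    (hg : IntervalIntegrable g volume s t) :
    (∫ θ in s..t, g θ) = c * (t - s) := by
  rcases eq_or_lt_of_le hst with rfl | hlt
  · simp
  have h' := (ae_restrict_iff' measurableSet_Ioo).1 h
  have hae : ∀ᵐ x ∂(volume : Measure ℝ), x ∈ Set.uIoc s t → g x = c := by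
    rw [ae_iff]
    rw [ae_iff] at h'
    refine measure_mono_null (fun x hx => ?_)
      (measure_union_null h' ((Set.finite_singleton t).measure_zero volume))
    simp only [Set.mem_setOf_eq, not_forall] at hx
    obtain ⟨hmem, hne⟩ := hx
    rw [Set.uIoc_of_le hst, Set.mem_Ioc] at hmem
    by_cases hxt : x = t
    · exact Or.inr (by simp [hxt])
    · left
      simp only [Set.mem_setOf_eq, not_forall]
      have hxlt : x < t := lt_of_le_of_ne hmem.2 hxt
      exact ⟨⟨by linarith [hmem.1], by linarith⟩, hne⟩
  rw [intervalIntegral.integral_congr_ae hae]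
  rw [intervalIntegral.integral_const, smul_eq_mul, mul_comm]


/-! #### Steady state backward propagation -/

include htail hhead hcap htime hsink hu hf in
lemma steadyStep {r m : ℝ} (hr : 1 ≤ r) (hrm : r + 1 ≤ m) (hmU : m ≤ (U:ℝ))
    (hD : ∀ ζ ∈ Set.Icc r m, q N f 2 ζ = 1 + q N f 3 ζ) :
    ∀ ζ ∈ Set.Icc (r-1) m, q N f 2 ζ = 1 + q N f 3 ζ := by
  have hq3nn : ∀ ζ : ℝ, 0 ≤ ζ → 0 ≤ q N f 3 ζ := fun ζ hζ => qnonneg htime hf 3 hζ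
  -- the queue on edge 2 is positive on [r,m], so it drains at rate 1
  have hfm2 : ∀ ζ ∈ Set.Icc r m, f.fminus 2 (ζ+1) = 1 := by
    intro ζ hζ
    have hζ0 : (0:ℝ) ≤ ζ := le_trans (by linarith) hζ.1
    apply fm_pos_one htail hhead hcap htime hsink hu hf 2 (Or.inl rfl) hζ0
    have := hD ζ hζ
    have := hq3nn ζ hζ0
    linarith
  -- the balance function ψ has zero integral on subintervals of [r,m]
  set ψ : ℝ → ℝ := fun ζ => f.fplus 2 ζ - f.fplus 3 ζ - 1 + f.fminus 3 (ζ + 1) with hψdef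
  have hψint : ∀ s t : ℝ, IntervalIntegrable ψ volume s t := by
    intro s t
    exact (((intFp 2 s t).sub (intFp 3 s t)).sub intervalIntegrable_const).add (intFm1 3 s t)
  have hint : ∀ s t, r ≤ s → s ≤ t → t ≤ m → (∫ ζ in s..t, ψ ζ) = 0 := by
    intro s t hs hst ht
    have hDdiff : q N f 2 t - q N f 2 s = q N f 3 t - q N f 3 s := by
      have h1 := hD s ⟨hs, le_trans hst ht⟩
      have h2 := hD t ⟨le_trans hs hst, ht⟩
      linarith
    have h2d := qdiff (f := f) htime 2 s t
    have h3d := qdiff (f := f) htime 3 s t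
    have hfm2int : (∫ ζ in s..t, f.fminus 2 (ζ + 1)) = ∫ ζ in s..t, (1:ℝ) := by
      apply intCongrIoo hst (intFm1 2 s t) intervalIntegrable_const
      intro ζ h1 h2
      exact hfm2 ζ ⟨le_trans hs (le_of_lt h1), le_trans (le_of_lt h2) ht⟩
    rw [intervalIntegral.integral_const, smul_eq_mul, mul_one] at hfm2int
    have hsplit : (∫ ζ in s..t, ψ ζ) = (∫ ζ in s..t, f.fplus 2 ζ)
        - (∫ ζ in s..t, f.fplus 3 ζ) - (∫ ζ in s..t, (1:ℝ))
        + ∫ ζ in s..t, f.fminus 3 (ζ + 1) := by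
      rw [hψdef]
      rw [intervalIntegral.integral_add (((intFp 2 s t).sub (intFp 3 s t)).sub
        intervalIntegrable_const) (intFm1 3 s t),
        intervalIntegral.integral_sub ((intFp 2 s t).sub (intFp 3 s t))
          intervalIntegrable_const,
        intervalIntegral.integral_sub (intFp 2 s t) (intFp 3 s t)]
    rw [intervalIntegral.integral_const, smul_eq_mul, mul_one] at hsplit
    rw [hsplit]
    linarith
  -- hence ψ = 0 a.e. on (r,m)
  have hψloc : MeasureTheory.LocallyIntegrable ψ volume := locInt hψint
  have hψae := IDEx.aeZeroOfIntegrals hψloc hint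
  -- a.e. on (r,m), the inflow into edge 2 equals 1
  have hfp2ae : ∀ᵐ ζ ∂(volume.restrict (Set.Ioo r m)), f.fplus 2 ζ = 1 := by
    filter_upwards [hψae, ae_restrict_mem measurableSet_Ioo] with ζ hψζ hζmem
    have hζ0 : (0:ℝ) ≤ ζ := le_trans (by linarith) (le_of_lt hζmem.1)
    have hζ1 : (1:ℝ) ≤ ζ := le_trans hr (le_of_lt hζmem.1)
    -- conservation : fplus 2 ζ + fplus 3 ζ = 2
    have hsum : f.fplus 2 ζ + f.fplus 3 ζ = 2 := by
      have h2 : f.fplus 2 ζ = f.fplus 0 (ζ - 1) := by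
        have := fp2_delay htail hhead hcap htime hsink hu hf (by linarith : (0:ℝ) ≤ ζ - 1)
        rw [show ζ - 1 + 1 = ζ by ring] at this
        exact this
      have h3 : f.fplus 3 ζ = f.fplus 1 (ζ - 1) := by
        have := fp3_delay htail hhead hcap htime hsink hu hf (by linarith : (0:ℝ) ≤ ζ - 1)
        rw [show ζ - 1 + 1 = ζ by ring] at this
        exact this
      rw [h2, h3, cons_s htail hhead hsink hf (by linarith : (0:ℝ) ≤ ζ - 1), hu]
      rw [if_pos ⟨rfl, by constructor <;> [linarith; linarith [hζmem.2]]⟩]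
    -- queue condition for edge 3
    have hiv3 := hivq htime hf 3 hζ0
    rw [(capv hcap).2.2.2.1] at hiv3
    rw [hψdef] at hψζ
    simp only at hψζ
    rw [hiv3] at hψζ
    by_cases hq3 : 0 < q N f 3 ζ
    · rw [if_pos hq3] at hψζ
      linarith
    · rw [if_neg hq3] at hψζ
      rcases le_total (f.fplus 3 ζ) 1 with hle | hle
      · rw [min_eq_left hle] at hψζ
        linarith
      · rw [min_eq_right hle] at hψζ
        linarith
  -- shift : a.e. on (r-1, m-1) both source flows are 1
  have hfp0ae : ∀ᵐ ζ ∂(volume.restrict (Set.Ioo (r-1) (m-1))),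
      f.fplus 0 ζ = 1 ∧ f.fplus 1 ζ = 1 := by
    have hsh := IDEx.aeShift (P := fun z : ℝ => z = 1) hfp2ae
    filter_upwards [hsh, ae_restrict_mem measurableSet_Ioo] with ζ hζeq hζmem
    have hζ0 : (0:ℝ) ≤ ζ := by
      have := hζmem.1; linarith
    have h0 : f.fplus 0 ζ = 1 := by
      rw [← fp2_delay htail hhead hcap htime hsink hu hf hζ0]
      exact hζeq
    refine ⟨h0, ?_⟩
    have hcons := cons_s htail hhead hsink hf hζ0
    rw [hu, if_pos ⟨rfl, hζ0, by linarith [hζmem.2]⟩] at hcons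
    linarith
  -- hence a.e. on (r-1, m-1) both edges are active, so labels agree
  have hDae : ∀ᵐ ζ ∂(volume.restrict (Set.Ioo (r-1) (m-1))),
      q N f 2 ζ = 1 + q N f 3 ζ := by
    filter_upwards [hfp0ae, ae_restrict_mem measurableSet_Ioo] with ζ hζeq hζmem
    have hζ0 : (0:ℝ) ≤ ζ := by have := hζmem.1; linarith
    have hle := posflow0 htail hhead hcap htime hsink hu hf hζ0 (by rw [hζeq.1]; norm_num)
    have hge := posflow1 htail hhead hcap htime hsink hu hf hζ0 (by rw [hζeq.2]; norm_num)
    linarith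
  -- by continuity, equality on [r-1, m-1]
  have hcont : Continuous (fun ζ => q N f 2 ζ - (1 + q N f 3 ζ)) :=
    (qcont htime 2).sub (continuous_const.add (qcont htime 3))
  have hrm1 : r - 1 < m - 1 := by linarith
  have hle1 := IDEx.densIcc hcont hrm1 (by
    filter_upwards [hDae] with ζ hζ
    show q N f 2 ζ - (1 + q N f 3 ζ) ≤ 0
    linarith : ∀ᵐ θ ∂(volume.restrict (Set.Ioo (r-1) (m-1))),
      (fun ζ => q N f 2 ζ - (1 + q N f 3 ζ)) θ ≤ 0)
  have hcont2 : Continuous (fun ζ => (1 + q N f 3 ζ) - q N f 2 ζ) :=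
    (continuous_const.add (qcont htime 3)).sub (qcont htime 2)
  have hle2 := IDEx.densIcc hcont2 hrm1 (by
    filter_upwards [hDae] with ζ hζ
    show (1 + q N f 3 ζ) - q N f 2 ζ ≤ 0
    linarith : ∀ᵐ θ ∂(volume.restrict (Set.Ioo (r-1) (m-1))),
      (fun ζ => (1 + q N f 3 ζ) - q N f 2 ζ) θ ≤ 0)
  intro ζ hζ
  rcases le_or_gt ζ (m-1) with hc | hc
  · have h1 := hle1 ζ ⟨hζ.1, hc⟩
    have h2 := hle2 ζ ⟨hζ.1, hc⟩
    linarith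
  · exact hD ζ ⟨by linarith, hζ.2⟩


/-! #### No long constant window -/

include htail hhead hcap htime hsink hu hf in
lemma no_const_window {a b : ℝ} (h0a : 0 ≤ a) (hab : a + 4 ≤ b) (hbU : b ≤ (U:ℝ))
    (hconst : ∀ e : Fin 5, AEConstOn (f.fplus e) (Set.Ioo a b) ∧
      AEConstOn (f.fminus e) (Set.Ioo a b)) :
    False := by
  obtain ⟨cp0, hcp0⟩ := (hconst 0).1
  obtain ⟨cp1, hcp1⟩ := (hconst 1).1
  obtain ⟨cp2, hcp2⟩ := (hconst 2).1
  obtain ⟨cp3, hcp3⟩ := (hconst 3).1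
  obtain ⟨cm2, hcm2⟩ := (hconst 2).2
  obtain ⟨cm3, hcm3⟩ := (hconst 3).2
  have haltb : a < b := by linarith
  have hab1 : a + 1 < b - 1 := by linarith
  have hq3nn : ∀ ζ : ℝ, 0 ≤ ζ → 0 ≤ q N f 3 ζ := fun ζ hζ => qnonneg htime hf 3 hζ
  have hq2nn : ∀ ζ : ℝ, 0 ≤ ζ → 0 ≤ q N f 2 ζ := fun ζ hζ => qnonneg htime hf 2 hζ
  -- the sum of the source flows is 2 pointwise on (a,b)
  have hsumpt : ∀ θ ∈ Set.Ioo a b, f.fplus 0 θ + f.fplus 1 θ = 2 := by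
    intro θ hθ
    rw [cons_s htail hhead hsink hf (le_trans h0a (le_of_lt hθ.1)), hu]
    rw [if_pos ⟨rfl, le_trans h0a (le_of_lt hθ.1), lt_of_lt_of_le hθ.2 hbU⟩]
  have hsum : cp0 + cp1 = 2 := by
    obtain ⟨θ, hθmem, hθ⟩ := IDEx.aePoint haltb (hcp0.and hcp1)
    rw [← hθ.1, ← hθ.2]
    exact hsumpt θ hθmem
  have hcp0nn : 0 ≤ cp0 := by
    obtain ⟨θ, hθmem, hθ⟩ := IDEx.aePoint haltb hcp0
    rw [← hθ]; exact f.fplus_nonneg 0 θ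
  have hcp1nn : 0 ≤ cp1 := by
    obtain ⟨θ, hθmem, hθ⟩ := IDEx.aePoint haltb hcp1
    rw [← hθ]; exact f.fplus_nonneg 1 θ
  have hablt1 : a < b - 1 := by linarith
  -- shift identification
  have hcp2eq : cp2 = cp0 := by
    have hsh := IDEx.aeShift (P := fun z : ℝ => z = cp2) hcp2
    have h1 := ae_restrict_of_ae_restrict_of_subset
      (Set.Ioo_subset_Ioo (by linarith) le_rfl : Set.Ioo a (b-1) ⊆ Set.Ioo (a-1) (b-1)) hsh
    have h2 := ae_restrict_of_ae_restrict_of_subset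
      (Set.Ioo_subset_Ioo le_rfl (by linarith) : Set.Ioo a (b-1) ⊆ Set.Ioo a b) hcp0
    obtain ⟨ζ, hζmem, hζ⟩ := IDEx.aePoint hablt1 (h1.and h2)
    rw [← hζ.1, ← hζ.2]
    exact fp2_delay htail hhead hcap htime hsink hu hf (le_trans h0a (le_of_lt hζmem.1))
  have hcp3eq : cp3 = cp1 := by
    have hsh := IDEx.aeShift (P := fun z : ℝ => z = cp3) hcp3
    have h1 := ae_restrict_of_ae_restrict_of_subset
      (Set.Ioo_subset_Ioo (by linarith) le_rfl : Set.Ioo a (b-1) ⊆ Set.Ioo (a-1) (b-1)) hsh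
    have h2 := ae_restrict_of_ae_restrict_of_subset
      (Set.Ioo_subset_Ioo le_rfl (by linarith) : Set.Ioo a (b-1) ⊆ Set.Ioo a b) hcp1
    obtain ⟨ζ, hζmem, hζ⟩ := IDEx.aePoint hablt1 (h1.and h2)
    rw [← hζ.1, ← hζ.2]
    exact fp3_delay htail hhead hcap htime hsink hu hf (le_trans h0a (le_of_lt hζmem.1))
  -- a.e. characterization of the outflow constants on the inner window
  have hW : ∀ (e : Fin 5), e = 2 ∨ e = 3 →
      ∀ (cpe cme : ℝ), (∀ᵐ θ ∂(volume.restrict (Set.Ioo a b)), f.fplus e θ = cpe) →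
      (∀ᵐ θ ∂(volume.restrict (Set.Ioo a b)), f.fminus e θ = cme) →
      ∀ᵐ ζ ∂(volume.restrict (Set.Ioo (a+1) (b-1))),
        cme = if 0 < q N f e ζ then 1 else min cpe 1 := by
    intro e he cpe cme hcpe hcme
    have hsh := IDEx.aeShift (P := fun z : ℝ => z = cme) hcme
    have h1 := ae_restrict_of_ae_restrict_of_subset
      (Set.Ioo_subset_Ioo (by linarith) le_rfl :
        Set.Ioo (a+1) (b-1) ⊆ Set.Ioo (a-1) (b-1)) hsh
    have h2 := ae_restrict_of_ae_restrict_of_subset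
      (Set.Ioo_subset_Ioo (by linarith) (by linarith) :
        Set.Ioo (a+1) (b-1) ⊆ Set.Ioo a b) hcpe
    filter_upwards [h1, h2, ae_restrict_mem measurableSet_Ioo] with ζ hζ1 hζ2 hζmem
    have hζ0 : (0:ℝ) ≤ ζ := by
      have := hζmem.1; linarith
    have hiv := hivq htime hf e hζ0
    have hcape : N.cap e = 1 := by
      rcases he with rfl | rfl
      · exact (capv hcap).2.2.1
      · exact (capv hcap).2.2.2.1
    rw [hcape] at hiv
    rw [← hζ1, hiv, ← hζ2]
  have hW2 := hW 2 (Or.inl rfl) cp2 cm2 hcp2 hcm2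
  have hW3 := hW 3 (Or.inr rfl) cp3 cm3 hcp3 hcm3
  -- affine evolution of queues on the inner window
  have haff : ∀ (e : Fin 5) (cpe cme : ℝ),
      (∀ᵐ θ ∂(volume.restrict (Set.Ioo a b)), f.fplus e θ = cpe) →
      (∀ᵐ θ ∂(volume.restrict (Set.Ioo a b)), f.fminus e θ = cme) →
      ∀ s t, a + 1 ≤ s → s ≤ t → t ≤ b - 1 →
        q N f e t - q N f e s = (cpe - cme) * (t - s) := by
    intro e cpe cme hcpe hcme s t hs hst ht
    have hfp : (∫ ζ in s..t, f.fplus e ζ) = cpe * (t - s) :=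
      intOfAE hcpe (by linarith) hst (by linarith) (intFp e s t)
    have hfm : (∫ ζ in s..t, f.fminus e (ζ + 1)) = cme * (t - s) := by
      have hcomp : (∫ ζ in s..t, f.fminus e (ζ + 1)) = ∫ ζ in (s+1)..(t+1), f.fminus e ζ :=
        intervalIntegral.integral_comp_add_right (f.fminus e) 1
      rw [hcomp]
      have := intOfAE hcme (by linarith : a ≤ s + 1) (by linarith : s + 1 ≤ t + 1)
        (by linarith : t + 1 ≤ b) (intFm e (s+1) (t+1))
      rw [this]
      ring
    rw [qdiff (f := f) htime e s t, hfp, hfm]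
    ring
  -- case analysis on the constant source split
  by_cases hcase2 : cp0 = 2
  · -- all flow to the upper path
    have hcp1z : cp1 = 0 := by linarith
    have hactae : ∀ᵐ θ ∂(volume.restrict (Set.Ioo a b)),
        (fun ζ => q N f 2 ζ - (1 + q N f 3 ζ)) θ ≤ 0 := by
      filter_upwards [hcp0, ae_restrict_mem measurableSet_Ioo] with θ hθ hθmem
      have := posflow0 htail hhead hcap htime hsink hu hf
        (le_trans h0a (le_of_lt hθmem.1)) (by rw [hθ, hcase2]; norm_num)
      show q N f 2 θ - (1 + q N f 3 θ) ≤ 0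
      linarith
    have hact := IDEx.densIcc ((qcont htime 2).sub (continuous_const.add (qcont htime 3)))
      haltb hactae
    have hcm2v : cm2 = 1 := by
      obtain ⟨ζ, hζmem, hζ⟩ := IDEx.aePoint hab1 hW2
      rw [hζ]
      split
      · rfl
      · rw [hcp2eq, hcase2]; norm_num
    have hq2grow := haff 2 cp2 cm2 hcp2 hcm2 (a+1) (b-1) le_rfl (by linarith) le_rfl
    rw [hcm2v, hcp2eq, hcase2] at hq2grow
    have hq2a1 : 0 ≤ q N f 2 (a+1) := hq2nn (a+1) (by linarith)
    have hq3bd := (global_bounds htail hhead hcap htime hsink hu hf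
      (by linarith : (0:ℝ) ≤ a + 1)).2
    have hcb := hact (b-1) ⟨by linarith, by linarith⟩
    simp only [Pi.sub_apply, Pi.add_apply] at hcb
    by_cases hcm3v : cm3 = 1
    · have hq3drop := haff 3 cp3 cm3 hcp3 hcm3 (a+1) (b-1) le_rfl (by linarith) le_rfl
      rw [hcm3v, hcp3eq, hcp1z] at hq3drop
      linarith
    · have hq3ae : ∀ᵐ ζ ∂(volume.restrict (Set.Ioo (a+1) (b-1))),
          (fun ζ => q N f 3 ζ) ζ ≤ 0 := by
        filter_upwards [hW3] with ζ hζ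
        show q N f 3 ζ ≤ 0
        by_contra hpos
        push_neg at hpos
        rw [if_pos hpos] at hζ
        exact hcm3v hζ
      have hq3icc := IDEx.densIcc (qcont htime 3) hab1 hq3ae
      have := hq3icc (b-1) ⟨by linarith, le_rfl⟩
      linarith
  · by_cases hcase0 : cp0 = 0
    · -- all flow to the lower path
      have hcp1t : cp1 = 2 := by linarith
      have hactae : ∀ᵐ θ ∂(volume.restrict (Set.Ioo a b)),
          (fun ζ => (1 + q N f 3 ζ) - q N f 2 ζ) θ ≤ 0 := by
        filter_upwards [hcp1, ae_restrict_mem measurableSet_Ioo] with θ hθ hθmem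
        have := posflow1 htail hhead hcap htime hsink hu hf
          (le_trans h0a (le_of_lt hθmem.1)) (by rw [hθ, hcp1t]; norm_num)
        show (1 + q N f 3 θ) - q N f 2 θ ≤ 0
        linarith
      have hact := IDEx.densIcc ((continuous_const.add (qcont htime 3)).sub (qcont htime 2))
        haltb hactae
      have hcm3v : cm3 = 1 := by
        obtain ⟨ζ, hζmem, hζ⟩ := IDEx.aePoint hab1 hW3
        rw [hζ]
        split
        · rfl
        · rw [hcp3eq, hcp1t]; norm_num
      have hcm2v : cm2 = 1 := by
        obtain ⟨ζ, hζmem, hζ⟩ := IDEx.aePoint hab1 hW2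
        have hζIcc : ζ ∈ Set.Icc a b := ⟨by linarith [hζmem.1], by linarith [hζmem.2]⟩
        have hgt := hact ζ hζIcc
        simp only [Pi.sub_apply, Pi.add_apply] at hgt
        have hq3ζ := hq3nn ζ (by linarith [hζmem.1])
        rw [hζ, if_pos (by linarith : 0 < q N f 2 ζ)]
      have hq3grow := haff 3 cp3 cm3 hcp3 hcm3 (a+1) (b-1) le_rfl (by linarith) le_rfl
      rw [hcm3v, hcp3eq, hcp1t] at hq3grow
      have hq2drop := haff 2 cp2 cm2 hcp2 hcm2 (a+1) (b-1) le_rfl (by linarith) le_rfl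
      rw [hcm2v, hcp2eq, hcase0] at hq2drop
      have hq2bd := (global_bounds htail hhead hcap htime hsink hu hf
        (by linarith : (0:ℝ) ≤ a + 1)).1
      have hq3a1 : 0 ≤ q N f 3 (a+1) := hq3nn (a+1) (by linarith)
      have hcb := hact (b-1) ⟨by linarith, by linarith⟩
      simp only [Pi.sub_apply, Pi.add_apply] at hcb
      linarith
    · -- interior split : steady state, impossible by backward induction
      have hcp0pos : 0 < cp0 := lt_of_le_of_ne hcp0nn (Ne.symm hcase0)
      have hcp1pos : 0 < cp1 := by
        rcases lt_or_eq_of_le hcp1nn with h | h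
        · exact h
        · exfalso; apply hcase2; linarith
      have hDae : ∀ᵐ θ ∂(volume.restrict (Set.Ioo a b)),
          q N f 2 θ = 1 + q N f 3 θ := by
        filter_upwards [hcp0, hcp1, ae_restrict_mem measurableSet_Ioo] with θ h0 h1 hθmem
        have hθ0 : (0:ℝ) ≤ θ := le_trans h0a (le_of_lt hθmem.1)
        have hle := posflow0 htail hhead hcap htime hsink hu hf hθ0 (by rw [h0]; exact hcp0pos)
        have hge := posflow1 htail hhead hcap htime hsink hu hf hθ0 (by rw [h1]; exact hcp1pos)
        linarith
      have hle1 := IDEx.densIcc ((qcont htime 2).sub (continuous_const.add (qcont htime 3)))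
        haltb (by
          filter_upwards [hDae] with ζ hζ
          show q N f 2 ζ - (1 + q N f 3 ζ) ≤ 0
          linarith)
      have hle2 := IDEx.densIcc ((continuous_const.add (qcont htime 3)).sub (qcont htime 2))
        haltb (by
          filter_upwards [hDae] with ζ hζ
          show (1 + q N f 3 ζ) - q N f 2 ζ ≤ 0
          linarith)
      have hD : ∀ ζ ∈ Set.Icc a b, q N f 2 ζ = 1 + q N f 3 ζ := by
        intro ζ hζ
        have h1 := hle1 ζ hζ
        have h2 := hle2 ζ hζ
        simp only [Pi.sub_apply, Pi.add_apply] at h1 h2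
        linarith
      obtain ⟨hq21, hq31⟩ := q23_early htail hhead hcap htime hsink hu hf
        (zero_le_one) le_rfl
      have hiter : ∀ k : ℕ, 1 ≤ a - (k:ℝ) →
          ∀ ζ ∈ Set.Icc (a - (k:ℝ)) b, q N f 2 ζ = 1 + q N f 3 ζ := by
        intro k
        induction k with
        | zero =>
          intro _ ζ hζ
          refine hD ζ ⟨?_, hζ.2⟩
          have := hζ.1
          push_cast at this
          linarith
        | succ n ih =>
          intro h1
          have h1n : 1 ≤ a - (n:ℝ) := by push_cast at h1 ⊢; linarith
          have hprev := ih h1n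
          have hstep := steadyStep htail hhead hcap htime hsink hu hf h1n
            (by linarith : (a - (n:ℝ)) + 1 ≤ b) hbU hprev
          intro ζ hζ
          apply hstep
          refine ⟨?_, hζ.2⟩
          have := hζ.1
          push_cast at this
          linarith
      rcases le_or_gt 1 a with ha1 | ha1
      · have hk1 : ((⌊a-1⌋₊ : ℕ):ℝ) ≤ a - 1 := Nat.floor_le (by linarith)
        have hk2 : a - 1 < (⌊a-1⌋₊:ℝ) + 1 := Nat.lt_floor_add_one _
        have h1k : 1 ≤ a - (⌊a-1⌋₊:ℝ) := by linarith
        have hIcc := hiter ⌊a-1⌋₊ h1k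
        have hfinal := steadyStep htail hhead hcap htime hsink hu hf h1k
          (by linarith : (a - (⌊a-1⌋₊:ℝ)) + 1 ≤ b) hbU hIcc
        have h1mem : (1:ℝ) ∈ Set.Icc (a - (⌊a-1⌋₊:ℝ) - 1) b := ⟨by linarith, by linarith⟩
        have := hfinal 1 h1mem
        rw [hq21, hq31] at this
        linarith
      · have := hD 1 ⟨by linarith, by linarith⟩
        rw [hq21, hq31] at this
        linarith

end Net

end IDEx

/-- In the five-node network `N₀` (nodes `s=0, v=1, w=2, x=3, t=4`,
edges `sv=0, sw=1, vt=2, wx=3, xt=4`, all travel times `1`, capacities `2,2,1,1,1`,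
sink `t`) with network inflow rate `2·1_{[0,U)}` at `s`, every IDE flow has at least
`⌊U/4⌋` phases: any partition of `ℝ≥0` into `n+1` intervals of a.e. constant in- and
outflow rates satisfies `⌊U/4⌋ ≤ n+1`. Hence the number of phases of an IDE is in
general not polynomially bounded in the encoding size (`O(log U)`) of the instance. -/
theorem ide_output_complexity_lower_bound
    (U : ℕ) (hU : 1 ≤ U)
    (N : Network (Fin 5) (Fin 5))
    (htail : N.tail = ![0, 0, 1, 2, 3])
    (hhead : N.head = ![1, 2, 4, 3, 4])
    (hcap : N.cap = ![2, 2, 1, 1, 1])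
    (htime : ∀ e, N.time e = 1)
    (hsink : N.sink = 4)
    (hu : ∀ w θ, N.u w θ = if w = 0 ∧ 0 ≤ θ ∧ θ < (U : ℝ) then 2 else 0) :
    ∀ f : FlowOverTime N, IsIDE N f →
      ∀ (n : ℕ) (t : ℕ → ℝ), PhasePartition N f n t → U / 4 ≤ n + 1 := by
  intro f hf n t hpart
  obtain ⟨ht0, hmono, hconsts⟩ := hpart
  -- any open interval inside (0,U) on which all rates are a.e. constant has length ≤ 4
  have hIoo : ∀ A B : ℝ, 0 ≤ A → B ≤ (U:ℝ) →
      (∀ e : Fin 5, AEConstOn (f.fplus e) (Set.Ioo A B) ∧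
        AEConstOn (f.fminus e) (Set.Ioo A B)) →
      volume (Set.Ioo A B) ≤ ENNReal.ofReal 4 := by
    intro A B hA hB hc
    rw [Real.volume_Ioo]
    by_contra hgt
    push_neg at hgt
    have h4 : (4:ℝ) < B - A := by
      have := (ENNReal.ofReal_lt_ofReal_iff_of_nonneg (by norm_num : (0:ℝ) ≤ 4)).1 hgt
      linarith
    exact IDEx.no_const_window htail hhead hcap htime hsink hu hf hA
      (by linarith) hB hc
  -- each phase segment covers at most 4 units of (0,U)
  have hseg : ∀ i : ℕ, i ≤ n →
      volume (phaseSeg n t i ∩ Set.Ioo (0:ℝ) (U:ℝ)) ≤ ENNReal.ofReal 4 := by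
    intro i hi
    by_cases hcase : i < n
    · have hsub : phaseSeg n t i ∩ Set.Ioo (0:ℝ) (U:ℝ) ⊆
          Set.Ioo (max (t i) 0) (min (t (i+1)) (U:ℝ)) := by
        intro x hx
        rw [phaseSeg, if_pos hcase] at hx
        exact ⟨max_lt hx.1.1 hx.2.1, lt_min hx.1.2 hx.2.2⟩
      refine le_trans (measure_mono hsub) (hIoo _ _ (le_max_right _ _) (min_le_right _ _) ?_)
      intro e
      have hsub2 : Set.Ioo (max (t i) 0) (min (t (i+1)) (U:ℝ)) ⊆ phaseSeg n t i := by
        rw [phaseSeg, if_pos hcase]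
        intro x hx
        exact ⟨lt_of_le_of_lt (le_max_left _ _) hx.1,
          lt_of_lt_of_le hx.2 (min_le_left _ _)⟩
      exact ⟨⟨((hconsts i hi e).1).choose,
          ae_restrict_of_ae_restrict_of_subset hsub2 ((hconsts i hi e).1).choose_spec⟩,
        ⟨((hconsts i hi e).2).choose,
          ae_restrict_of_ae_restrict_of_subset hsub2 ((hconsts i hi e).2).choose_spec⟩⟩
    · have hin : i = n := le_antisymm hi (not_lt.1 hcase)
      subst hin
      have hsub : phaseSeg i t i ∩ Set.Ioo (0:ℝ) (U:ℝ) ⊆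
          Set.Ioo (max (t i) 0) (U:ℝ) := by
        intro x hx
        rw [phaseSeg, if_neg hcase] at hx
        exact ⟨max_lt hx.1 hx.2.1, hx.2.2⟩
      refine le_trans (measure_mono hsub) (hIoo _ _ (le_max_right _ _) le_rfl ?_)
      intro e
      have hsub2 : Set.Ioo (max (t i) 0) (U:ℝ) ⊆ phaseSeg i t i := by
        rw [phaseSeg, if_neg hcase]
        intro x hx
        exact lt_of_le_of_lt (le_max_left _ _) hx.1
      exact ⟨⟨((hconsts i hi e).1).choose,
          ae_restrict_of_ae_restrict_of_subset hsub2 ((hconsts i hi e).1).choose_spec⟩,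
        ⟨((hconsts i hi e).2).choose,
          ae_restrict_of_ae_restrict_of_subset hsub2 ((hconsts i hi e).2).choose_spec⟩⟩
  -- the segments and the break points cover (0,U)
  have hcover : Set.Ioo (0:ℝ) (U:ℝ) ⊆
      (⋃ i ∈ Finset.range (n+1), (phaseSeg n t i ∩ Set.Ioo (0:ℝ) (U:ℝ))) ∪
      (⋃ i ∈ Finset.range (n+1), {t i}) := by
    intro θ hθ
    by_cases hex : ∃ i ∈ Finset.range (n+1), θ = t i
    · right
      obtain ⟨i, hi1, hi2⟩ := hex
      exact Set.mem_biUnion hi1 (by simp [hi2])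
    · left
      push_neg at hex
      rcases lt_or_ge (t n) θ with hgt | hle
      · refine Set.mem_biUnion (Finset.self_mem_range_succ n) ⟨?_, hθ⟩
        rw [phaseSeg, if_neg (lt_irrefl n)]
        exact hgt
      · -- θ ≤ t n and θ avoids all break points
        have hθlt : θ < t n := lt_of_le_of_ne hle (hex n (Finset.self_mem_range_succ n))
        have hKne : ((Finset.range (n+1)).filter (fun j => t j < θ)).Nonempty := by
          refine ⟨0, ?_⟩
          rw [Finset.mem_filter]
          exact ⟨Finset.mem_range.2 (Nat.succ_pos n), by rw [ht0]; exact hθ.1⟩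
        obtain ⟨i, hiK, himax⟩ : ∃ i ∈ (Finset.range (n+1)).filter (fun j => t j < θ),
            ∀ j ∈ (Finset.range (n+1)).filter (fun j => t j < θ), j ≤ i :=
          ⟨_, Finset.max'_mem _ hKne, fun j hj => Finset.le_max' _ j hj⟩
        rw [Finset.mem_filter, Finset.mem_range] at hiK
        have hilt : i < n := by
          rcases lt_or_eq_of_le (Nat.lt_succ_iff.1 hiK.1) with h | h
          · exact h
          · exfalso; rw [h] at hiK; linarith [hiK.2]
        have hnext : θ < t (i+1) := by
          rcases lt_trichotomy (t (i+1)) θ with h | h | h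
          · exfalso
            have hmem : i + 1 ∈ (Finset.range (n+1)).filter (fun j => t j < θ) := by
              rw [Finset.mem_filter, Finset.mem_range]
              exact ⟨Nat.succ_lt_succ hilt, h⟩
            have := himax _ hmem
            omega
          · exact absurd h.symm (hex (i+1) (Finset.mem_range.2 (Nat.succ_lt_succ hilt)))
          · exact h
        refine Set.mem_biUnion (Finset.mem_range.2 (Nat.lt_succ_of_lt hilt)) ⟨?_, hθ⟩
        rw [phaseSeg, if_pos hilt]
        exact ⟨hiK.2, hnext⟩
  -- measure bookkeeping
  have hvol : ENNReal.ofReal (U:ℝ) ≤ (n+1) * ENNReal.ofReal 4 := by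
    have h1 : volume (Set.Ioo (0:ℝ) (U:ℝ)) = ENNReal.ofReal (U:ℝ) := by
      rw [Real.volume_Ioo, sub_zero]
    calc ENNReal.ofReal (U:ℝ) = volume (Set.Ioo (0:ℝ) (U:ℝ)) := h1.symm
      _ ≤ volume ((⋃ i ∈ Finset.range (n+1), (phaseSeg n t i ∩ Set.Ioo (0:ℝ) (U:ℝ))) ∪
          (⋃ i ∈ Finset.range (n+1), {t i})) := measure_mono hcover
      _ ≤ volume (⋃ i ∈ Finset.range (n+1), (phaseSeg n t i ∩ Set.Ioo (0:ℝ) (U:ℝ))) +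
          volume (⋃ i ∈ Finset.range (n+1), ({t i} : Set ℝ)) := measure_union_le _ _
      _ ≤ (∑ i ∈ Finset.range (n+1), volume (phaseSeg n t i ∩ Set.Ioo (0:ℝ) (U:ℝ))) + 0 := by
          gcongr
          · exact measure_biUnion_finset_le _ _
          · refine le_trans (measure_biUnion_finset_le _ _) ?_
            simp [Real.volume_singleton]
      _ ≤ (∑ _i ∈ Finset.range (n+1), ENNReal.ofReal 4) + 0 := by
          gcongr with i hi
          exact hseg i (Nat.lt_succ_iff.1 (Finset.mem_range.1 hi))
      _ = (n+1) * ENNReal.ofReal 4 := by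
          rw [Finset.sum_const, Finset.card_range, add_zero, nsmul_eq_mul]
          norm_num
  -- conclude the natural-number inequality
  have hreal : (U:ℝ) ≤ 4 * ((n:ℝ) + 1) := by
    have h2 : ((n : ENNReal) + 1) * ENNReal.ofReal 4 = ENNReal.ofReal (4 * ((n:ℝ)+1)) := by
      rw [ENNReal.ofReal_mul (by norm_num : (0:ℝ) ≤ 4),
        ENNReal.ofReal_add (by positivity : (0:ℝ) ≤ (n:ℝ)) zero_le_one,
        ENNReal.ofReal_natCast, ENNReal.ofReal_one]
      ring
    rw [h2] at hvol
    have := (ENNReal.ofReal_le_ofReal_iff (by positivity)).1 hvol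
    linarith
  have hnat : U ≤ 4 * (n + 1) := by
    have : (U:ℝ) ≤ ((4 * (n+1) : ℕ) : ℝ) := by push_cast; linarith
    exact_mod_cast this
  calc U / 4 ≤ (4 * (n+1)) / 4 := Nat.div_le_div_right hnat
    _ = n + 1 := Nat.mul_div_cancel_left _ (by norm_num)
end

section
/- Let N₀ be the five-node network described below, equipped with the everlasting constant network inflow rate u_s(θ) = 2 for all θ ≥ 0 at node s and zero inflow at all other nodes. Then every instantaneous dynamic equilibrium (IDE) flow in this network satisfies, for every integer k ≥ 1: q_vt(4k + 2^{−k}) = 1 − 2^{−k}, q_wx(4k + 2^{−k}) = 2 − 2^{−k}, q_vt(4k + 2^{−k} + 2) = 3 − 2^{−k}, and q_wx(4k + 2) = 0. -/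
open MeasureTheory Set

variable {V E : Type} [Fintype V] [DecidableEq V] [Fintype E] [DecidableEq E]

/-- Integral of a function that is constant on the open interval (up to a finite
exceptional set). -/
lemma myint_const {F : ℝ → ℝ} {a b c : ℝ} (hab : a ≤ b)
    (s : Finset ℝ) (h : ∀ ζ ∈ Set.Ioo a b, ζ ∉ s → F ζ = c) :
    ∫ ζ in a..b, F ζ = c * (b - a) := by
  have hnull : (volume : Measure ℝ) ({b} ∪ (s : Set ℝ)) = 0 :=
    measure_union_null (measure_singleton b) (Finset.measure_zero s volume)
  have hae : ∀ᵐ x ∂(volume : Measure ℝ), x ∈ Set.uIoc a b → F x = c := by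
    filter_upwards [measure_eq_zero_iff_ae_notMem.mp hnull] with x hx hxm
    have hxs : x ∉ (s : Set ℝ) := fun hh => hx (Set.mem_union_right _ hh)
    have hxb : x ≠ b := fun hh => hx (Set.mem_union_left _ hh)
    rw [Set.uIoc_of_le hab] at hxm
    exact h x ⟨hxm.1, lt_of_le_of_ne hxm.2 hxb⟩ hxs
  calc ∫ ζ in a..b, F ζ = ∫ _ in a..b, c := intervalIntegral.integral_congr_ae hae
  _ = c * (b - a) := by rw [intervalIntegral.integral_const, smul_eq_mul]; ring

/-- Continuous induction: a function satisfying a linear evolution law while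
positive stays equal to the (positive) comparison function. -/
lemma stay_linear {q v : ℝ → ℝ} {a b : ℝ} (hab : a ≤ b)
    (hq : Continuous q) (hqa : q a = v a)
    (hv : ∀ θ ∈ Set.Ico a b, 0 < v θ)
    (hstep : ∀ θ ∈ Set.Ioc a b, (∀ ζ ∈ Set.Ico a θ, 0 < q ζ) → q θ = v θ) :
    ∀ θ ∈ Set.Icc a b, q θ = v θ := by
  by_contra hcon
  push_neg at hcon
  obtain ⟨θ₀, hθ₀, hne⟩ := hcon
  set T : Set ℝ := {θ ∈ Set.Icc a b | q θ ≠ v θ} with hT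
  have hTne : T.Nonempty := ⟨θ₀, hθ₀, hne⟩
  have hTbdd : BddBelow T := ⟨a, fun x hx => hx.1.1⟩
  set c := sInf T with hc
  have hca : a ≤ c := le_csInf hTne (fun x hx => hx.1.1)
  have hcb : c ≤ b := by
    obtain ⟨x, hxT⟩ := hTne
    exact le_trans (csInf_le hTbdd hxT) hxT.1.2
  -- everything strictly below c agrees
  have hbelow : ∀ ζ, a ≤ ζ → ζ < c → q ζ = v ζ := by
    intro ζ h1 h2
    by_contra hne2
    exact absurd (csInf_le hTbdd ⟨⟨h1, le_trans h2.le hcb⟩, hne2⟩) (not_le.mpr h2)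
  have haT : a ∉ T := fun h => h.2 hqa
  -- c itself agrees
  have hcnot : c ∉ T := by
    intro hcT
    have hcalt : a < c := lt_of_le_of_ne hca (fun h => haT (h ▸ hcT))
    exact hcT.2 (hstep c ⟨hcalt, hcb⟩ (fun ζ hζ => by
      rw [hbelow ζ hζ.1 hζ.2]
      exact hv ζ ⟨hζ.1, lt_of_lt_of_le hζ.2 hcb⟩))
  have hqc : q c = v c := by
    by_contra hne2
    exact hcnot ⟨⟨hca, hcb⟩, hne2⟩
  have hclt : c < b := by
    rcases lt_or_eq_of_le hcb with h | h
    · exact h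
    · exfalso
      obtain ⟨x, hxT⟩ := hTne
      have : x = c := le_antisymm (h ▸ hxT.1.2) (csInf_le hTbdd hxT)
      exact hcnot (this ▸ hxT)
  -- q is positive on [a,c], hence on [a, c+δ) by continuity
  have hqcpos : 0 < q c := hqc ▸ hv c ⟨hca, hclt⟩
  have hnb : q ⁻¹' Set.Ioi 0 ∈ nhds c := hq.continuousAt.preimage_mem_nhds (Ioi_mem_nhds hqcpos)
  obtain ⟨δ, hδpos, hball⟩ := Metric.mem_nhds_iff.mp hnb
  -- pick an element of T below c + δ
  have hex : ∃ x ∈ T, x < c + δ := exists_lt_of_csInf_lt hTne (by linarith)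
  obtain ⟨x, hxT, hxlt⟩ := hex
  have hcx : c ≤ x := csInf_le hTbdd hxT
  have hax : a < x := by
    rcases lt_or_eq_of_le (hca.trans hcx) with h | h
    · exact h
    · exact absurd (h ▸ hxT) haT
  refine hxT.2 (hstep x ⟨hax, hxT.1.2⟩ (fun ζ hζ => ?_))
  rcases lt_or_ge ζ c with h | h
  · rw [hbelow ζ hζ.1 h]; exact hv ζ ⟨hζ.1, lt_of_lt_of_le h hcb⟩
  · exact hball (by
      simp only [Metric.mem_ball, Real.dist_eq, abs_lt]
      constructor <;> nlinarith [hζ.2])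

/-- Continuous induction: a nonnegative function that does not increase while
positive stays at zero. -/
lemma stay_zero {q : ℝ → ℝ} {a b : ℝ} (hq : Continuous q)
    (hqa : q a = 0) (hnn : ∀ θ ∈ Set.Icc a b, 0 ≤ q θ)
    (hstep : ∀ θ₁ θ₂, a ≤ θ₁ → θ₁ ≤ θ₂ → θ₂ ≤ b →
      (∀ ζ ∈ Set.Ioo θ₁ θ₂, 0 < q ζ) → q θ₂ ≤ q θ₁) :
    ∀ θ ∈ Set.Icc a b, q θ = 0 := by
  intro θ hθ
  by_contra hne
  have hpos : 0 < q θ := lt_of_le_of_ne (hnn θ hθ) (Ne.symm hne)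
  set Z : Set ℝ := Set.Icc a θ ∩ q ⁻¹' {0} with hZ
  have hZne : Z.Nonempty := ⟨a, ⟨le_refl a, hθ.1⟩, hqa⟩
  have hZbdd : BddAbove Z := ⟨θ, fun x hx => hx.1.2⟩
  have hZclosed : IsClosed Z := isClosed_Icc.inter (isClosed_singleton.preimage hq)
  have hzZ : sSup Z ∈ Z := hZclosed.csSup_mem hZne hZbdd
  set z := sSup Z with hz
  have hzθ : z < θ := lt_of_le_of_ne hzZ.1.2 (fun h => hne (h ▸ hzZ.2))
  have hmid : ∀ ζ ∈ Set.Ioo z θ, 0 < q ζ := by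
    intro ζ hζ
    have h1 : ζ ∈ Set.Icc a b := ⟨hzZ.1.1.trans hζ.1.le, hζ.2.le.trans hθ.2⟩
    rcases lt_or_eq_of_le (hnn ζ h1) with h | h
    · exact h
    · exact absurd (le_csSup hZbdd ⟨⟨hzZ.1.1.trans hζ.1.le, hζ.2.le⟩, h.symm⟩)
        (not_le.mpr hζ.1)
  have := hstep z θ hzZ.1.1 hzθ.le hθ.2 hmid
  rw [show q z = 0 from hzZ.2] at this
  linarith

/-- Continuous induction: a function starting at `0` that does not decrease while
nonpositive stays nonnegative. -/
lemma stay_nonneg {q : ℝ → ℝ} {b : ℝ} (hq : Continuous q) (hq0 : q 0 = 0)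
    (hstep : ∀ θ₁ θ₂, 0 ≤ θ₁ → θ₁ ≤ θ₂ → θ₂ ≤ b →
      (∀ ζ ∈ Set.Icc θ₁ θ₂, q ζ ≤ 0) → q θ₁ ≤ q θ₂) :
    ∀ θ ∈ Set.Icc (0:ℝ) b, 0 ≤ q θ := by
  intro θ hθ
  by_contra hne
  push_neg at hne
  set Z : Set ℝ := Set.Icc 0 θ ∩ q ⁻¹' {0} with hZ
  have hZne : Z.Nonempty := ⟨0, ⟨le_refl _, hθ.1⟩, hq0⟩
  have hZbdd : BddAbove Z := ⟨θ, fun x hx => hx.1.2⟩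
  have hZclosed : IsClosed Z := isClosed_Icc.inter (isClosed_singleton.preimage hq)
  have hzZ : sSup Z ∈ Z := hZclosed.csSup_mem hZne hZbdd
  set z := sSup Z with hz
  have hzθ : z < θ := lt_of_le_of_ne hzZ.1.2 (fun h => (h ▸ hzZ.2 ▸ hne).false)
  -- q < 0 on (z, θ] : otherwise IVT yields a zero beyond z
  have hneg : ∀ ζ ∈ Set.Ioc z θ, q ζ ≤ 0 := by
    intro ζ hζ
    by_contra hpos
    push_neg at hpos
    have hsub : (0:ℝ) ∈ Set.Icc (q θ) (q ζ) := ⟨hne.le, hpos.le⟩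
    have := intermediate_value_Icc' hζ.2 hq.continuousOn hsub
    obtain ⟨x, hx, hqx⟩ := this
    have : x ∈ Z := ⟨⟨(hzZ.1.1.trans hζ.1.le).trans hx.1, hx.2⟩, hqx⟩
    have := le_csSup hZbdd this
    have : ζ ≤ z := le_trans hx.1 this |>.trans (le_refl z) -- wrong; fix below
    exact absurd this (not_le.mpr hζ.1)
  have hstepz := hstep z θ hzZ.1.1 hzθ.le hθ.2 (fun ζ hζ => by
    rcases eq_or_lt_of_le hζ.1 with h | h
    · rw [← h, hzZ.2]
    · exact hneg ζ ⟨h, hζ.2⟩)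
  rw [show q z = 0 from hzZ.2] at hstepz
  linarith

section Main

variable (N : Network (Fin 5) (Fin 5)) (f : FlowOverTime N)

lemma hIplus : ∀ (e : Fin 5) (a b : ℝ), IntervalIntegrable (f.fplus e) volume a b :=
  fun e a b => (f.fplus_int e a).symm.trans (f.fplus_int e b)

lemma hIminus : ∀ (e : Fin 5) (a b : ℝ), IntervalIntegrable (f.fminus e) volume a b :=
  fun e a b => (f.fminus_int e a).symm.trans (f.fminus_int e b)

lemma hQcont (e : Fin 5) : Continuous (queueOf N f.fplus f.fminus e) := by
  unfold queueOf
  apply Continuous.sub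
  · exact intervalIntegral.continuous_primitive (fun a b => hIplus N f e a b) 0
  · exact (intervalIntegral.continuous_primitive (fun a b => hIminus N f e a b) 0).comp
      (continuous_id.add continuous_const)

lemma hQdiff (htime : ∀ e, N.time e = 1) (e : Fin 5) (θ₁ θ₂ : ℝ) :
    queueOf N f.fplus f.fminus e θ₂ - queueOf N f.fplus f.fminus e θ₁ =
      (∫ ζ in θ₁..θ₂, f.fplus e ζ) - ∫ ζ in (θ₁+1)..(θ₂+1), f.fminus e ζ := by
  unfold queueOf
  rw [htime e]
  have h1 := intervalIntegral.integral_interval_sub_left (hIplus N f e 0 θ₂) (hIplus N f e 0 θ₁)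
  have h2 := intervalIntegral.integral_interval_sub_left (hIminus N f e 0 (θ₂+1)) (hIminus N f e 0 (θ₁+1))
  rw [← h1, ← h2]
  ring

lemma hconsv (hIDE : IsIDE N f)
    (htail : N.tail = ![0, 0, 1, 2, 3]) (hhead : N.head = ![1, 2, 4, 3, 4])
    (hsink : N.sink = 4) (hu : ∀ w θ, N.u w θ = if w = 0 ∧ 0 ≤ θ then 2 else 0) :
    (∀ θ:ℝ, 0 ≤ θ → f.fplus 0 θ + f.fplus 1 θ = 2) ∧
    (∀ θ:ℝ, 0 ≤ θ → f.fplus 2 θ = f.fminus 0 θ) ∧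
    (∀ θ:ℝ, 0 ≤ θ → f.fplus 3 θ = f.fminus 1 θ) ∧
    (∀ θ:ℝ, 0 ≤ θ → f.fplus 4 θ = f.fminus 3 θ) := by
  have hout0 : N.outEdges 0 = {0, 1} := by
    simp only [Network.outEdges, htail]; decide
  have hout1 : N.outEdges 1 = {2} := by
    simp only [Network.outEdges, htail]; decide
  have hout2 : N.outEdges 2 = {3} := by
    simp only [Network.outEdges, htail]; decide
  have hout3 : N.outEdges 3 = {4} := by
    simp only [Network.outEdges, htail]; decide
  have hin0 : N.inEdges 0 = ∅ := by
    simp only [Network.inEdges, hhead]; decide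
  have hin1 : N.inEdges 1 = {0} := by
    simp only [Network.inEdges, hhead]; decide
  have hin2 : N.inEdges 2 = {1} := by
    simp only [Network.inEdges, hhead]; decide
  have hin3 : N.inEdges 3 = {3} := by
    simp only [Network.inEdges, hhead]; decide
  have hc := hIDE.1.1
  refine ⟨fun θ hθ => ?_, fun θ hθ => ?_, fun θ hθ => ?_, fun θ hθ => ?_⟩
  · have := hc 0 (by rw [hsink]; decide) θ hθ
    rw [hout0, hin0, hu] at this
    simp at this
    simpa [hθ] using this
  · have := hc 1 (by rw [hsink]; decide) θ hθ
    rw [hout1, hin1, hu] at this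
    simp at this
    linarith
  · have := hc 2 (by rw [hsink]; decide) θ hθ
    rw [hout2, hin2, hu] at this
    simp at this
    linarith
  · have := hc 3 (by rw [hsink]; decide) θ hθ
    rw [hout3, hin3, hu] at this
    simp at this
    linarith

lemma hQzero_init (htime : ∀ e, N.time e = 1) (hIDE : IsIDE N f) (e : Fin 5) :
    queueOf N f.fplus f.fminus e 0 = 0 := by
  have hiii := hIDE.1.2.2.1
  unfold queueOf
  rw [htime e, intervalIntegral.integral_same, zero_add]
  have : ∫ ζ in (0:ℝ)..1, f.fminus e ζ = 0 * (1 - 0) := by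
    apply myint_const (by norm_num) ∅
    intro ζ hζ _
    exact hiii e ζ hζ.1.le (by rw [htime e]; exact hζ.2)
  rw [this]; ring

lemma hfm_le (htime : ∀ e, N.time e = 1) (hIDE : IsIDE N f) (e : Fin 5) (θ : ℝ) (hθ : 0 ≤ θ) :
    f.fminus e θ ≤ N.cap e := by
  rcases lt_or_ge θ 1 with h | h
  · rw [hIDE.1.2.2.1 e θ hθ (by rw [htime e]; exact h)]
    exact (N.cap_pos e).le
  · have := hIDE.1.2.2.2 e (θ - 1) (by linarith)
    rw [htime e] at this
    have h2 : θ - 1 + 1 = θ := by ring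
    rw [h2] at this
    rw [this]
    split
    · exact le_refl _
    · exact min_le_right _ _

lemma hQnn (htime : ∀ e, N.time e = 1) (hIDE : IsIDE N f) (e : Fin 5) (θ : ℝ) (hθ : 0 ≤ θ) :
    0 ≤ queueOf N f.fplus f.fminus e θ := by
  refine stay_nonneg (hQcont N f e) (hQzero_init N f htime hIDE e) ?_ θ ⟨hθ, le_refl _⟩
  intro θ₁ θ₂ h0 h12 _ hle
  have hd := hQdiff N f htime e θ₁ θ₂
  have hsub : (∫ ζ in (θ₁+1)..(θ₂+1), f.fminus e ζ) = ∫ x in θ₁..θ₂, f.fminus e (x + 1) := by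
    rw [intervalIntegral.integral_comp_add_right (f.fminus e) 1]
  have hmono : (∫ x in θ₁..θ₂, f.fminus e (x + 1)) ≤ ∫ x in θ₁..θ₂, f.fplus e x := by
    apply intervalIntegral.integral_mono_on h12
    · simpa using (hIminus N f e (θ₁+1) (θ₂+1)).comp_add_right 1
    · exact hIplus N f e θ₁ θ₂
    · intro x hx
      have hx0 : 0 ≤ x := le_trans h0 hx.1
      have := hIDE.1.2.2.2 e x hx0
      rw [htime e] at this
      rw [this]
      rw [if_neg (by push_neg; exact hle x hx)]
      exact min_le_left _ _
  linarith

/-- Queues on edges whose inflow rate never exceeds capacity stay empty. -/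
lemma hQzero_glob (htime : ∀ e, N.time e = 1) (hIDE : IsIDE N f) (e : Fin 5)
    (hfp_le : ∀ θ : ℝ, 0 ≤ θ → f.fplus e θ ≤ N.cap e) (θ : ℝ) (hθ : 0 ≤ θ) :
    queueOf N f.fplus f.fminus e θ = 0 := by
  refine stay_zero (hQcont N f e) (hQzero_init N f htime hIDE e)
    (fun ζ hζ => hQnn N f htime hIDE e ζ hζ.1) ?_ θ ⟨hθ, le_refl _⟩
  intro θ₁ θ₂ h0 h12 _ hpos
  have hd := hQdiff N f htime e θ₁ θ₂
  have hout : (∫ ζ in (θ₁+1)..(θ₂+1), f.fminus e ζ) = N.cap e * (θ₂ + 1 - (θ₁ + 1)) := by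
    apply myint_const (by linarith) ∅
    intro ζ hζ _
    have h1 : 0 ≤ ζ - 1 := by
      rcases hζ with ⟨hl, _⟩; linarith
    have := hIDE.1.2.2.2 e (ζ - 1) h1
    rw [htime e] at this
    have h2 : ζ - 1 + 1 = ζ := by ring
    rw [h2] at this
    rw [this, if_pos]
    exact hpos (ζ - 1) ⟨by rcases hζ with ⟨hl, _⟩; linarith, by rcases hζ with ⟨_, hr⟩; linarith⟩
  have hin : (∫ ζ in θ₁..θ₂, f.fplus e ζ) ≤ N.cap e * (θ₂ - θ₁) := by
    have : (∫ ζ in θ₁..θ₂, f.fplus e ζ) ≤ ∫ _ in θ₁..θ₂, N.cap e := by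
      apply intervalIntegral.integral_mono_on h12 (hIplus N f e θ₁ θ₂)
        intervalIntegrable_const
      intro x hx
      exact hfp_le x (le_trans h0 hx.1)
    rw [intervalIntegral.integral_const, smul_eq_mul] at this
    linarith
  have : (θ₂ + 1 - (θ₁ + 1)) = θ₂ - θ₁ := by ring
  rw [this] at hout
  linarith

/-- Queues on `sv`, `sw` and `xt` are always empty; inflow relations. -/
lemma base_facts (htail : N.tail = ![0, 0, 1, 2, 3]) (hhead : N.head = ![1, 2, 4, 3, 4])
    (hcap : N.cap = ![2, 2, 1, 1, 1]) (htime : ∀ e, N.time e = 1) (hsink : N.sink = 4)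
    (hu : ∀ w θ, N.u w θ = if w = 0 ∧ 0 ≤ θ then 2 else 0) (hIDE : IsIDE N f) :
    (∀ θ : ℝ, 0 ≤ θ → queueOf N f.fplus f.fminus 0 θ = 0) ∧
    (∀ θ : ℝ, 0 ≤ θ → queueOf N f.fplus f.fminus 1 θ = 0) ∧
    (∀ θ : ℝ, 0 ≤ θ → queueOf N f.fplus f.fminus 4 θ = 0) ∧
    (∀ ζ : ℝ, 1 ≤ ζ → f.fplus 2 ζ = f.fplus 0 (ζ - 1)) ∧
    (∀ ζ : ℝ, 1 ≤ ζ → f.fplus 3 ζ = f.fplus 1 (ζ - 1)) ∧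
    (∀ ζ : ℝ, 0 ≤ ζ → ζ < 1 → f.fplus 2 ζ = 0) ∧
    (∀ ζ : ℝ, 0 ≤ ζ → ζ < 1 → f.fplus 3 ζ = 0) := by
  obtain ⟨hc0, hc1, hc2, hc3⟩ := hconsv N f hIDE htail hhead hsink hu
  have hfp0le : ∀ θ : ℝ, 0 ≤ θ → f.fplus 0 θ ≤ N.cap 0 := by
    intro θ hθ
    have := hc0 θ hθ
    have h2 := f.fplus_nonneg 1 θ
    rw [hcap]; simp only [Matrix.cons_val_zero]
    linarith
  have hfp1le : ∀ θ : ℝ, 0 ≤ θ → f.fplus 1 θ ≤ N.cap 1 := by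
    intro θ hθ
    have := hc0 θ hθ
    have h2 := f.fplus_nonneg 0 θ
    rw [hcap]; simp only [Matrix.cons_val_one, Matrix.head_cons, Matrix.cons_val_zero]
    linarith
  have hfp4le : ∀ θ : ℝ, 0 ≤ θ → f.fplus 4 θ ≤ N.cap 4 := by
    intro θ hθ
    rw [hc3 θ hθ]
    have := hfm_le N f htime hIDE 3 θ hθ
    rw [hcap] at this ⊢
    simpa using this
  refine ⟨hQzero_glob N f htime hIDE 0 hfp0le, hQzero_glob N f htime hIDE 1 hfp1le,
    hQzero_glob N f htime hIDE 4 hfp4le, ?_, ?_, ?_, ?_⟩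
  · intro ζ hζ
    rw [hc1 ζ (by linarith)]
    have hiv := hIDE.1.2.2.2 0 (ζ - 1) (by linarith)
    rw [htime 0] at hiv
    have h2 : ζ - 1 + 1 = ζ := by ring
    rw [h2] at hiv
    rw [hiv, if_neg (by
      rw [hQzero_glob N f htime hIDE 0 hfp0le (ζ - 1) (by linarith)]
      exact lt_irrefl 0)]
    exact min_eq_left (hfp0le (ζ - 1) (by linarith))
  · intro ζ hζ
    rw [hc2 ζ (by linarith)]
    have hiv := hIDE.1.2.2.2 1 (ζ - 1) (by linarith)
    rw [htime 1] at hiv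
    have h2 : ζ - 1 + 1 = ζ := by ring
    rw [h2] at hiv
    rw [hiv, if_neg (by
      rw [hQzero_glob N f htime hIDE 1 hfp1le (ζ - 1) (by linarith)]
      exact lt_irrefl 0)]
    exact min_eq_left (hfp1le (ζ - 1) (by linarith))
  · intro ζ h0 h1
    rw [hc1 ζ h0]
    exact hIDE.1.2.2.1 0 ζ h0 (by rw [htime 0]; exact h1)
  · intro ζ h0 h1
    rw [hc2 ζ h0]
    exact hIDE.1.2.2.1 1 ζ h0 (by rw [htime 1]; exact h1)

/-- Queue evolution: inflow rate `2`, capacity `1`: queue grows at rate `1`. -/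
lemma P_inc (htime : ∀ e, N.time e = 1) (hIDE : IsIDE N f) (e : Fin 5)
    (hcape : N.cap e = 1) {a b : ℝ} (ha : 0 ≤ a) (hab : a ≤ b) (s : Finset ℝ)
    (hin : ∀ ζ ∈ Set.Ioo a b, ζ ∉ s → f.fplus e ζ = 2) :
    ∀ θ ∈ Set.Icc a b, queueOf N f.fplus f.fminus e θ =
      queueOf N f.fplus f.fminus e a + (θ - a) := by
  intro θ hθ
  have hd := hQdiff N f htime e a θ
  have hI : (∫ ζ in a..θ, f.fplus e ζ) = 2 * (θ - a) :=
    myint_const hθ.1 s (fun ζ hζ hs => hin ζ ⟨hζ.1, lt_of_lt_of_le hζ.2 hθ.2⟩ hs)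
  have hO : (∫ ζ in (a+1)..(θ+1), f.fminus e ζ) = 1 * (θ + 1 - (a + 1)) := by
    apply myint_const (by linarith [hθ.1]) (s.image (· + 1))
    intro ζ hζ hs
    have h1 : ζ - 1 ∈ Set.Ioo a b := ⟨by linarith [hζ.1], by linarith [hζ.2, hθ.2]⟩
    have h2 : ζ - 1 ∉ s := fun h => hs (Finset.mem_image.mpr ⟨ζ - 1, h, by ring⟩)
    have hiv := hIDE.1.2.2.2 e (ζ - 1) (by linarith [h1.1])
    rw [htime e] at hiv
    have h3 : ζ - 1 + 1 = ζ := by ring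
    rw [h3] at hiv
    rw [hiv, hcape, hin (ζ - 1) h1 h2]
    split <;> norm_num
  linarith

/-- Queue evolution: inflow rate `0`, capacity `1`: a positive queue drains at rate `1`. -/
lemma P_dec (htime : ∀ e, N.time e = 1) (hIDE : IsIDE N f) (e : Fin 5)
    (hcape : N.cap e = 1) {a b : ℝ} (ha : 0 ≤ a) (hab : a ≤ b) (s : Finset ℝ)
    (hin : ∀ ζ ∈ Set.Ioo a b, ζ ∉ s → f.fplus e ζ = 0)
    (hlen : b - a ≤ queueOf N f.fplus f.fminus e a) :
    ∀ θ ∈ Set.Icc a b, queueOf N f.fplus f.fminus e θ =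
      queueOf N f.fplus f.fminus e a - (θ - a) := by
  have hpos : 0 < queueOf N f.fplus f.fminus e a ∨ a = b := by
    rcases eq_or_lt_of_le hab with h | h
    · exact Or.inr h
    · exact Or.inl (lt_of_lt_of_le (by linarith) hlen)
  rcases hpos with hpos | rfl
  swap
  · intro θ hθ
    have : θ = a := le_antisymm hθ.2 hθ.1
    rw [this]; ring
  have := stay_linear hab (hQcont N f e)
    (v := fun θ => queueOf N f.fplus f.fminus e a - (θ - a)) (by simp)
    (fun θ hθ => by linarith [hθ.2]) ?_
  · exact fun θ hθ => this θ hθ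
  intro θ hθ hq
  have hd := hQdiff N f htime e a θ
  have hI : (∫ ζ in a..θ, f.fplus e ζ) = 0 * (θ - a) :=
    myint_const (hθ.1.le) s (fun ζ hζ hs => hin ζ ⟨hζ.1, lt_of_lt_of_le hζ.2 hθ.2⟩ hs)
  have hO : (∫ ζ in (a+1)..(θ+1), f.fminus e ζ) = 1 * (θ + 1 - (a + 1)) := by
    apply myint_const (by linarith [hθ.1.le]) ∅
    intro ζ hζ _
    have h1 : ζ - 1 ∈ Set.Ico a θ := ⟨by linarith [hζ.1], by linarith [hζ.2]⟩
    have hiv := hIDE.1.2.2.2 e (ζ - 1) (by linarith [h1.1])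
    rw [htime e] at hiv
    have h3 : ζ - 1 + 1 = ζ := by ring
    rw [h3] at hiv
    rw [hiv, hcape, if_pos (hq (ζ - 1) h1)]
  linarith

/-- Queue evolution: inflow rate `0`: an empty queue stays empty. -/
lemma P_zero (htime : ∀ e, N.time e = 1) (hIDE : IsIDE N f) (e : Fin 5)
    (hcape : N.cap e = 1) {a b : ℝ} (ha : 0 ≤ a) (hab : a ≤ b) (s : Finset ℝ)
    (hin : ∀ ζ ∈ Set.Ioo a b, ζ ∉ s → f.fplus e ζ = 0)
    (hqa : queueOf N f.fplus f.fminus e a = 0) :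
    ∀ θ ∈ Set.Icc a b, queueOf N f.fplus f.fminus e θ = 0 := by
  refine stay_zero (hQcont N f e) hqa
    (fun ζ hζ => hQnn N f htime hIDE e ζ (le_trans ha hζ.1)) ?_
  intro θ₁ θ₂ h1 h12 h2 hq
  have hd := hQdiff N f htime e θ₁ θ₂
  have hI : (∫ ζ in θ₁..θ₂, f.fplus e ζ) = 0 * (θ₂ - θ₁) :=
    myint_const h12 s (fun ζ hζ hs => hin ζ ⟨lt_of_le_of_lt h1 hζ.1, lt_of_lt_of_le hζ.2 h2⟩ hs)
  have hO : (∫ ζ in (θ₁+1)..(θ₂+1), f.fminus e ζ) = 1 * (θ₂ + 1 - (θ₁ + 1)) := by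
    apply myint_const (by linarith) ∅
    intro ζ hζ _
    have h1' : ζ - 1 ∈ Set.Ioo θ₁ θ₂ := ⟨by linarith [hζ.1], by linarith [hζ.2]⟩
    have hiv := hIDE.1.2.2.2 e (ζ - 1) (by linarith [h1'.1, ha, h1])
    rw [htime e] at hiv
    have h3 : ζ - 1 + 1 = ζ := by ring
    rw [h3] at hiv
    rw [hiv, hcape, if_pos (hq (ζ - 1) h1')]
  linarith

lemma walks_char (tl hd : Fin 5 → Fin 5) (htl : tl = ![0,0,1,2,3]) (hhd : hd = ![1,2,4,3,4]) :
    (∀ L, IsWalk tl hd 4 4 L ↔ L = []) ∧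
    (∀ L, IsWalk tl hd 1 4 L ↔ L = [2]) ∧
    (∀ L, IsWalk tl hd 3 4 L ↔ L = [4]) ∧
    (∀ L, IsWalk tl hd 2 4 L ↔ L = [3, 4]) ∧
    (∀ L, IsWalk tl hd 0 4 L ↔ L = [0, 2] ∨ L = [1, 3, 4]) := by
  subst htl hhd
  have h4 : ∀ L, IsWalk (![0,0,1,2,3] : Fin 5 → Fin 5) (![1,2,4,3,4] : Fin 5 → Fin 5) 4 4 L ↔ L = [] := by
    intro L
    cases L with
    | nil => simp only [IsWalk] <;> decide
    | cons e L' =>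
      simp only [IsWalk]
      constructor
      · rintro ⟨he, -⟩
        exfalso
        revert he
        fin_cases e <;> decide
      · intro h; exact absurd h (by simp)
  have h1 : ∀ L, IsWalk (![0,0,1,2,3] : Fin 5 → Fin 5) (![1,2,4,3,4] : Fin 5 → Fin 5) 1 4 L ↔ L = [2] := by
    intro L
    cases L with
    | nil => simp only [IsWalk] <;> decide
    | cons e L' =>
      simp only [IsWalk]
      constructor
      · rintro ⟨he, hw⟩
        have he2 : e = 2 := by revert he; fin_cases e <;> decide
        subst he2
        have : (![1,2,4,3,4] : Fin 5 → Fin 5) 2 = 4 := by decide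
        rw [this] at hw
        rw [(h4 L').mp hw]
      · rintro h
        injection h with h1 h2
        subst h1; subst h2
        exact ⟨by decide, (h4 []).mpr rfl⟩
  have h3 : ∀ L, IsWalk (![0,0,1,2,3] : Fin 5 → Fin 5) (![1,2,4,3,4] : Fin 5 → Fin 5) 3 4 L ↔ L = [4] := by
    intro L
    cases L with
    | nil => simp only [IsWalk] <;> decide
    | cons e L' =>
      simp only [IsWalk]
      constructor
      · rintro ⟨he, hw⟩
        have he2 : e = 4 := by revert he; fin_cases e <;> decide
        subst he2
        have : (![1,2,4,3,4] : Fin 5 → Fin 5) 4 = 4 := by decide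
        rw [this] at hw
        rw [(h4 L').mp hw]
      · rintro h
        injection h with h1 h2
        subst h1; subst h2
        exact ⟨by decide, (h4 []).mpr rfl⟩
  have h2 : ∀ L, IsWalk (![0,0,1,2,3] : Fin 5 → Fin 5) (![1,2,4,3,4] : Fin 5 → Fin 5) 2 4 L ↔ L = [3, 4] := by
    intro L
    cases L with
    | nil => simp only [IsWalk] <;> decide
    | cons e L' =>
      simp only [IsWalk]
      constructor
      · rintro ⟨he, hw⟩
        have he2 : e = 3 := by revert he; fin_cases e <;> decide
        subst he2
        have : (![1,2,4,3,4] : Fin 5 → Fin 5) 3 = 3 := by decide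
        rw [this] at hw
        rw [(h3 L').mp hw]
      · rintro h
        injection h with h1 h2
        subst h1; subst h2
        exact ⟨by decide, (h3 [4]).mpr rfl⟩
  refine ⟨h4, h1, h3, h2, ?_⟩
  intro L
  cases L with
  | nil => simp only [IsWalk] <;> decide
  | cons e L' =>
    simp only [IsWalk]
    constructor
    · rintro ⟨he, hw⟩
      have he2 : e = 0 ∨ e = 1 := by revert he; fin_cases e <;> decide
      rcases he2 with rfl | rfl
      · have : (![1,2,4,3,4] : Fin 5 → Fin 5) 0 = 1 := by decide
        rw [this] at hw
        left; rw [(h1 L').mp hw]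
      · have : (![1,2,4,3,4] : Fin 5 → Fin 5) 1 = 2 := by decide
        rw [this] at hw
        right; rw [(h2 L').mp hw]
    · rintro (h | h) <;> (injection h with h1 h2; subst h1; subst h2)
      · exact ⟨by decide, (h1 [2]).mpr rfl⟩
      · exact ⟨by decide, (h2 [3,4]).mpr rfl⟩

/-- The IDE property pins down the inflow split at the source according to the
comparison of the two route lengths `2 + q_vt` and `3 + q_wx`. -/
lemma hG (htail : N.tail = ![0, 0, 1, 2, 3]) (hhead : N.head = ![1, 2, 4, 3, 4])
    (hcap : N.cap = ![2, 2, 1, 1, 1]) (htime : ∀ e, N.time e = 1) (hsink : N.sink = 4)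
    (hu : ∀ w θ, N.u w θ = if w = 0 ∧ 0 ≤ θ then 2 else 0) (hIDE : IsIDE N f)
    (θ : ℝ) (hθ : 0 ≤ θ) :
    (queueOf N f.fplus f.fminus 2 θ < 1 + queueOf N f.fplus f.fminus 3 θ →
       f.fplus 0 θ = 2 ∧ f.fplus 1 θ = 0) ∧
    (1 + queueOf N f.fplus f.fminus 3 θ < queueOf N f.fplus f.fminus 2 θ →
       f.fplus 0 θ = 0 ∧ f.fplus 1 θ = 2) := by
  obtain ⟨hQ0z, hQ1z, hQ4z, -, -, -, -⟩ :=
    base_facts N f htail hhead hcap htime hsink hu hIDE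
  obtain ⟨hc0, -, -, -⟩ := hconsv N f hIDE htail hhead hsink hu
  obtain ⟨w4, w1, w3, w2, w0⟩ := walks_char N.tail N.head htail hhead
  set A := queueOf N f.fplus f.fminus 2 θ with hA
  set B := queueOf N f.fplus f.fminus 3 θ with hB
  have hcap0 : N.cap 0 = 2 := by rw [hcap]; rfl
  have hcap1 : N.cap 1 = 2 := by rw [hcap]; rfl
  have hcap2 : N.cap 2 = 1 := by rw [hcap]; rfl
  have hcap3 : N.cap 3 = 1 := by rw [hcap]; rfl
  have hcap4 : N.cap 4 = 1 := by rw [hcap]; rfl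
  have hct0 : ctimeOf N f.fplus f.fminus 0 θ = 1 := by
    unfold ctimeOf; rw [htime 0, hQ0z θ hθ, hcap0]; norm_num
  have hct1 : ctimeOf N f.fplus f.fminus 1 θ = 1 := by
    unfold ctimeOf; rw [htime 1, hQ1z θ hθ, hcap1]; norm_num
  have hct4 : ctimeOf N f.fplus f.fminus 4 θ = 1 := by
    unfold ctimeOf; rw [htime 4, hQ4z θ hθ, hcap4]; norm_num
  have hct2 : ctimeOf N f.fplus f.fminus 2 θ = 1 + A := by
    unfold ctimeOf; rw [htime 2, hcap2, ← hA]; ring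
  have hct3 : ctimeOf N f.fplus f.fminus 3 θ = 1 + B := by
    unfold ctimeOf; rw [htime 3, hcap3, ← hB]; ring
  have hl1 : labelOf N f.fplus f.fminus 1 θ = 1 + A := by
    unfold labelOf
    rw [hsink]
    have hset : {r : ℝ | ∃ L, IsWalk N.tail N.head 1 4 L ∧
        r = (L.map (fun e => ctimeOf N f.fplus f.fminus e θ)).sum} = {1 + A} := by
      ext r
      simp only [Set.mem_setOf_eq, Set.mem_singleton_iff]
      constructor
      · rintro ⟨L, hL, rfl⟩
        rw [(w1 L).mp hL]
        simp [hct2]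
      · rintro rfl
        exact ⟨[2], (w1 [2]).mpr rfl, by simp [hct2]⟩
    rw [hset, csInf_singleton]
  have hl2 : labelOf N f.fplus f.fminus 2 θ = 2 + B := by
    unfold labelOf
    rw [hsink]
    have hset : {r : ℝ | ∃ L, IsWalk N.tail N.head 2 4 L ∧
        r = (L.map (fun e => ctimeOf N f.fplus f.fminus e θ)).sum} = {2 + B} := by
      ext r
      simp only [Set.mem_setOf_eq, Set.mem_singleton_iff]
      constructor
      · rintro ⟨L, hL, rfl⟩
        rw [(w2 L).mp hL]
        simp [hct3, hct4]; ring
      · rintro rfl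
        exact ⟨[3, 4], (w2 [3, 4]).mpr rfl, by simp [hct3, hct4]; ring⟩
    rw [hset, csInf_singleton]
  have hl0 : labelOf N f.fplus f.fminus 0 θ = min (2 + A) (3 + B) := by
    unfold labelOf
    rw [hsink]
    have hset : {r : ℝ | ∃ L, IsWalk N.tail N.head 0 4 L ∧
        r = (L.map (fun e => ctimeOf N f.fplus f.fminus e θ)).sum} = {2 + A, 3 + B} := by
      ext r
      simp only [Set.mem_setOf_eq, Set.mem_singleton_iff, Set.mem_insert_iff]
      constructor
      · rintro ⟨L, hL, rfl⟩
        rcases (w0 L).mp hL with rfl | rfl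
        · left; simp [hct0, hct2]; ring
        · right; simp [hct1, hct3, hct4]; ring
      · rintro (rfl | rfl)
        · exact ⟨[0, 2], (w0 [0, 2]).mpr (Or.inl rfl), by simp [hct0, hct2]; ring⟩
        · exact ⟨[1, 3, 4], (w0 [1, 3, 4]).mpr (Or.inr rfl), by simp [hct1, hct3, hct4]; ring⟩
    rw [hset]; exact csInf_pair _ _
  have htail0 : N.tail 0 = 0 := by rw [htail]; rfl
  have htail1 : N.tail 1 = 0 := by rw [htail]; rfl
  have hhead0 : N.head 0 = 1 := by rw [hhead]; rfl
  have hhead1 : N.head 1 = 2 := by rw [hhead]; rfl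
  constructor
  · intro hAB
    have hf1 : f.fplus 1 θ = 0 := by
      by_contra h
      have hpos : 0 < f.fplus 1 θ := lt_of_le_of_ne (f.fplus_nonneg 1 θ) (Ne.symm h)
      have hact := hIDE.2 1 θ hθ hpos
      unfold ActiveOf at hact
      rw [htail1, hhead1, hl0, hl2, hct1] at hact
      have hmin : min (2 + A) (3 + B) ≤ 2 + A := min_le_left _ _
      linarith
    exact ⟨by have := hc0 θ hθ; linarith, hf1⟩
  · intro hAB
    have hf0 : f.fplus 0 θ = 0 := by
      by_contra h
      have hpos : 0 < f.fplus 0 θ := lt_of_le_of_ne (f.fplus_nonneg 0 θ) (Ne.symm h)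
      have hact := hIDE.2 0 θ hθ hpos
      unfold ActiveOf at hact
      rw [htail0, hhead0, hl0, hl1, hct0] at hact
      have hmin : min (2 + A) (3 + B) ≤ 3 + B := min_le_right _ _
      linarith
    exact ⟨hf0, by have := hc0 θ hθ; linarith⟩

/-- One period of the oscillation: from the invariant at time `T` to the
invariant at time `T + 4 - ε/2`. -/
lemma step_lemma (htail : N.tail = ![0, 0, 1, 2, 3]) (hhead : N.head = ![1, 2, 4, 3, 4])
    (hcap : N.cap = ![2, 2, 1, 1, 1]) (htime : ∀ e, N.time e = 1) (hsink : N.sink = 4)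
    (hu : ∀ w θ, N.u w θ = if w = 0 ∧ 0 ≤ θ then 2 else 0) (hIDE : IsIDE N f)
    (ε T : ℝ) (hε0 : 0 < ε) (hε : ε ≤ 1/2) (hT : 4 ≤ T)
    (hAT : queueOf N f.fplus f.fminus 2 T = 1 - ε)
    (hBT : queueOf N f.fplus f.fminus 3 T = 2 - ε)
    (s : Finset ℝ) (hg : ∀ ζ ∈ Set.Ioo (T-1) T, ζ ∉ s → f.fplus 0 ζ = 2) :
    queueOf N f.fplus f.fminus 2 (T + 2) = 3 - ε ∧
    queueOf N f.fplus f.fminus 3 (T + 2 - ε) = 0 ∧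
    queueOf N f.fplus f.fminus 2 (T + 4 - ε/2) = 1 - ε/2 ∧
    queueOf N f.fplus f.fminus 3 (T + 4 - ε/2) = 2 - ε/2 ∧
    (∀ ζ ∈ Set.Ioo (T + 3 - ε/2) (T + 4 - ε/2), ζ ∉ ({T + 3} : Finset ℝ) →
      f.fplus 0 ζ = 2) := by
  obtain ⟨hQ0z, hQ1z, hQ4z, hf2, hf3, -, -⟩ :=
    base_facts N f htail hhead hcap htime hsink hu hIDE
  obtain ⟨hc0, -, -, -⟩ := hconsv N f hIDE htail hhead hsink hu
  have hcap2 : N.cap 2 = 1 := by rw [hcap]; rfl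
  have hcap3 : N.cap 3 = 1 := by rw [hcap]; rfl
  have hGf := hG N f htail hhead hcap htime hsink hu hIDE
  -- flow into `sw` vanishes on the carried interval
  have hg1 : ∀ ζ ∈ Set.Ioo (T-1) T, ζ ∉ s → f.fplus 1 ζ = 0 := by
    intro ζ hζ hs
    have := hc0 ζ (by rcases hζ with ⟨h, _⟩; linarith)
    have h2 := hg ζ hζ hs
    linarith
  -- piece 1 : A grows on [T, T+1]
  have hA1 : ∀ θ ∈ Set.Icc T (T+1), queueOf N f.fplus f.fminus 2 θ = 1 - ε + (θ - T) := by
    intro θ hθ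
    have := P_inc N f htime hIDE 2 hcap2 (a := T) (b := T+1) (by linarith) (by linarith)
      (s.image (· + 1)) (fun ζ hζ hs => by
        rw [hf2 ζ (by rcases hζ with ⟨h, _⟩; linarith)]
        exact hg (ζ - 1) ⟨by rcases hζ with ⟨h, _⟩; linarith,
            by rcases hζ with ⟨_, h⟩; linarith⟩
          (fun hmem => hs (Finset.mem_image.mpr ⟨ζ - 1, hmem, by ring⟩))) θ hθ
    rw [hAT] at this
    linarith
  -- piece 2 : B drains on [T, T+1]
  have hB1 : ∀ θ ∈ Set.Icc T (T+1), queueOf N f.fplus f.fminus 3 θ = 2 - ε - (θ - T) := by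
    intro θ hθ
    have := P_dec N f htime hIDE 3 hcap3 (a := T) (b := T+1) (by linarith) (by linarith)
      (s.image (· + 1)) (fun ζ hζ hs => by
        rw [hf3 ζ (by rcases hζ with ⟨h, _⟩; linarith)]
        exact hg1 (ζ - 1) ⟨by rcases hζ with ⟨h, _⟩; linarith,
            by rcases hζ with ⟨_, h⟩; linarith⟩
          (fun hmem => hs (Finset.mem_image.mpr ⟨ζ - 1, hmem, by ring⟩)))
      (by rw [hBT]; linarith) θ hθ
    rw [hBT] at this
    linarith
  -- flow split on (T, T+1)
  have hg2 : ∀ ζ ∈ Set.Ioo T (T+1), f.fplus 0 ζ = 2 ∧ f.fplus 1 ζ = 0 := by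
    intro ζ hζ
    refine (hGf ζ (by rcases hζ with ⟨h, _⟩; linarith)).1 ?_
    rw [hA1 ζ ⟨hζ.1.le, hζ.2.le⟩, hB1 ζ ⟨hζ.1.le, hζ.2.le⟩]
    rcases hζ with ⟨h1, h2⟩
    linarith
  -- piece 3 : A grows on [T+1, T+2]
  have hA2 : ∀ θ ∈ Set.Icc (T+1) (T+2),
      queueOf N f.fplus f.fminus 2 θ = 2 - ε + (θ - (T+1)) := by
    intro θ hθ
    have := P_inc N f htime hIDE 2 hcap2 (a := T+1) (b := T+2) (by linarith) (by linarith)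
      ∅ (fun ζ hζ _ => by
        rw [hf2 ζ (by rcases hζ with ⟨h, _⟩; linarith)]
        exact (hg2 (ζ - 1) ⟨by rcases hζ with ⟨h, _⟩; linarith,
          by rcases hζ with ⟨_, h⟩; linarith⟩).1) θ hθ
    rw [hA1 (T+1) ⟨by linarith, le_refl _⟩] at this
    linarith
  -- piece 4 : B drains to zero on [T+1, T+2-ε]
  have hB2 : ∀ θ ∈ Set.Icc (T+1) (T+2-ε),
      queueOf N f.fplus f.fminus 3 θ = 1 - ε - (θ - (T+1)) := by
    intro θ hθ
    have := P_dec N f htime hIDE 3 hcap3 (a := T+1) (b := T+2-ε) (by linarith) (by linarith)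
      ∅ (fun ζ hζ _ => by
        rw [hf3 ζ (by rcases hζ with ⟨h, _⟩; linarith)]
        exact (hg2 (ζ - 1) ⟨by rcases hζ with ⟨h, _⟩; linarith,
          by rcases hζ with ⟨_, h⟩; linarith⟩).2)
      (by rw [hB1 (T+1) ⟨by linarith, le_refl _⟩]; linarith) θ hθ
    rw [hB1 (T+1) ⟨by linarith, le_refl _⟩] at this
    linarith
  have hB2e : queueOf N f.fplus f.fminus 3 (T+2-ε) = 0 := by
    have := hB2 (T+2-ε) ⟨by linarith, le_refl _⟩
    linarith
  -- piece 5 : B stays zero on [T+2-ε, T+2]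
  have hB3 : ∀ θ ∈ Set.Icc (T+2-ε) (T+2), queueOf N f.fplus f.fminus 3 θ = 0 := by
    intro θ hθ
    exact P_zero N f htime hIDE 3 hcap3 (a := T+2-ε) (b := T+2) (by linarith) (by linarith)
      ∅ (fun ζ hζ _ => by
        rw [hf3 ζ (by rcases hζ with ⟨h, _⟩; linarith)]
        exact (hg2 (ζ - 1) ⟨by rcases hζ with ⟨h, _⟩; linarith,
          by rcases hζ with ⟨_, h⟩; linarith⟩).2) hB2e θ hθ
  -- flow split on (T+1, T+2)
  have hg3 : ∀ ζ ∈ Set.Ioo (T+1) (T+2), f.fplus 0 ζ = 0 ∧ f.fplus 1 ζ = 2 := by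
    intro ζ hζ
    refine (hGf ζ (by rcases hζ with ⟨h, _⟩; linarith)).2 ?_
    rw [hA2 ζ ⟨hζ.1.le, hζ.2.le⟩]
    rcases hζ with ⟨h1, h2⟩
    rcases le_or_gt ζ (T+2-ε) with h | h
    · rw [hB2 ζ ⟨h1.le, h⟩]; linarith
    · rw [hB3 ζ ⟨h.le, h2.le⟩]; linarith
  have hA2e : queueOf N f.fplus f.fminus 2 (T+2) = 3 - ε := by
    have := hA2 (T+2) ⟨by linarith, le_refl _⟩
    linarith
  -- piece 6 : A drains on [T+2, T+3]
  have hA3 : ∀ θ ∈ Set.Icc (T+2) (T+3),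
      queueOf N f.fplus f.fminus 2 θ = 3 - ε - (θ - (T+2)) := by
    intro θ hθ
    have := P_dec N f htime hIDE 2 hcap2 (a := T+2) (b := T+3) (by linarith) (by linarith)
      ∅ (fun ζ hζ _ => by
        rw [hf2 ζ (by rcases hζ with ⟨h, _⟩; linarith)]
        exact (hg3 (ζ - 1) ⟨by rcases hζ with ⟨h, _⟩; linarith,
          by rcases hζ with ⟨_, h⟩; linarith⟩).1)
      (by rw [hA2e]; linarith) θ hθ
    rw [hA2e] at this
    linarith
  -- piece 7 : B grows on [T+2, T+3]
  have hB4 : ∀ θ ∈ Set.Icc (T+2) (T+3),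
      queueOf N f.fplus f.fminus 3 θ = θ - (T+2) := by
    intro θ hθ
    have := P_inc N f htime hIDE 3 hcap3 (a := T+2) (b := T+3) (by linarith) (by linarith)
      ∅ (fun ζ hζ _ => by
        rw [hf3 ζ (by rcases hζ with ⟨h, _⟩; linarith)]
        exact (hg3 (ζ - 1) ⟨by rcases hζ with ⟨h, _⟩; linarith,
          by rcases hζ with ⟨_, h⟩; linarith⟩).2) θ hθ
    rw [hB3 (T+2) ⟨by linarith, le_refl _⟩] at this
    linarith
  -- flow split on (T+2, T+3-ε/2) and (T+3-ε/2, T+3)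
  have hg4 : ∀ ζ ∈ Set.Ioo (T+2) (T+3-ε/2), f.fplus 0 ζ = 0 ∧ f.fplus 1 ζ = 2 := by
    intro ζ hζ
    refine (hGf ζ (by rcases hζ with ⟨h, _⟩; linarith)).2 ?_
    rcases hζ with ⟨h1, h2⟩
    rw [hA3 ζ ⟨h1.le, by linarith⟩, hB4 ζ ⟨h1.le, by linarith⟩]
    linarith
  have hg5 : ∀ ζ ∈ Set.Ioo (T+3-ε/2) (T+3), f.fplus 0 ζ = 2 ∧ f.fplus 1 ζ = 0 := by
    intro ζ hζ
    refine (hGf ζ (by rcases hζ with ⟨h, _⟩; linarith)).1 ?_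
    rcases hζ with ⟨h1, h2⟩
    rw [hA3 ζ ⟨by linarith, h2.le⟩, hB4 ζ ⟨by linarith, h2.le⟩]
    linarith
  -- piece 8 : A drains on [T+3, T+4-ε/2]
  have hA4 : ∀ θ ∈ Set.Icc (T+3) (T+4-ε/2),
      queueOf N f.fplus f.fminus 2 θ = 2 - ε - (θ - (T+3)) := by
    intro θ hθ
    have := P_dec N f htime hIDE 2 hcap2 (a := T+3) (b := T+4-ε/2) (by linarith)
      (by linarith) ∅ (fun ζ hζ _ => by
        rw [hf2 ζ (by rcases hζ with ⟨h, _⟩; linarith)]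
        exact (hg4 (ζ - 1) ⟨by rcases hζ with ⟨h, _⟩; linarith,
          by rcases hζ with ⟨_, h⟩; linarith⟩).1)
      (by rw [hA3 (T+3) ⟨by linarith, le_refl _⟩]; linarith) θ hθ
    rw [hA3 (T+3) ⟨by linarith, le_refl _⟩] at this
    linarith
  -- piece 9 : B grows on [T+3, T+4-ε/2]
  have hB5 : ∀ θ ∈ Set.Icc (T+3) (T+4-ε/2),
      queueOf N f.fplus f.fminus 3 θ = 1 + (θ - (T+3)) := by
    intro θ hθ
    have := P_inc N f htime hIDE 3 hcap3 (a := T+3) (b := T+4-ε/2) (by linarith)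
      (by linarith) ∅ (fun ζ hζ _ => by
        rw [hf3 ζ (by rcases hζ with ⟨h, _⟩; linarith)]
        exact (hg4 (ζ - 1) ⟨by rcases hζ with ⟨h, _⟩; linarith,
          by rcases hζ with ⟨_, h⟩; linarith⟩).2) θ hθ
    rw [hB4 (T+3) ⟨by linarith, le_refl _⟩] at this
    linarith
  -- flow split on (T+3, T+4-ε/2)
  have hg6 : ∀ ζ ∈ Set.Ioo (T+3) (T+4-ε/2), f.fplus 0 ζ = 2 ∧ f.fplus 1 ζ = 0 := by
    intro ζ hζ
    refine (hGf ζ (by rcases hζ with ⟨h, _⟩; linarith)).1 ?_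
    rcases hζ with ⟨h1, h2⟩
    rw [hA4 ζ ⟨h1.le, h2.le⟩, hB5 ζ ⟨h1.le, h2.le⟩]
    linarith
  refine ⟨hA2e, hB2e, ?_, ?_, ?_⟩
  · have := hA4 (T+4-ε/2) ⟨by linarith, le_refl _⟩
    linarith
  · have := hB5 (T+4-ε/2) ⟨by linarith, le_refl _⟩
    linarith
  · intro ζ hζ hs
    rcases lt_trichotomy ζ (T+3) with h | h | h
    · exact (hg5 ζ ⟨hζ.1, h⟩).1
    · exact absurd (Finset.mem_singleton.mpr h) hs
    · exact (hg6 ζ ⟨h, hζ.2⟩).1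

/-- The base case: the invariant holds at time `4·1 + 2⁻¹ = 4.5`. -/
lemma base_lemma (htail : N.tail = ![0, 0, 1, 2, 3]) (hhead : N.head = ![1, 2, 4, 3, 4])
    (hcap : N.cap = ![2, 2, 1, 1, 1]) (htime : ∀ e, N.time e = 1) (hsink : N.sink = 4)
    (hu : ∀ w θ, N.u w θ = if w = 0 ∧ 0 ≤ θ then 2 else 0) (hIDE : IsIDE N f) :
    queueOf N f.fplus f.fminus 2 (9/2) = 1/2 ∧
    queueOf N f.fplus f.fminus 3 (9/2) = 3/2 ∧
    (∀ ζ ∈ Set.Ioo (7/2 : ℝ) (9/2), ζ ∉ (∅ : Finset ℝ) → f.fplus 0 ζ = 2) := by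
  obtain ⟨hQ0z, hQ1z, hQ4z, hf2, hf3, hf2z, hf3z⟩ :=
    base_facts N f htail hhead hcap htime hsink hu hIDE
  obtain ⟨hc0, -, -, -⟩ := hconsv N f hIDE htail hhead hsink hu
  have hcap2 : N.cap 2 = 1 := by rw [hcap]; rfl
  have hcap3 : N.cap 3 = 1 := by rw [hcap]; rfl
  have hGf := hG N f htail hhead hcap htime hsink hu hIDE
  have hA0 : ∀ θ ∈ Set.Icc (0:ℝ) 1, queueOf N f.fplus f.fminus 2 θ = 0 :=
    P_zero N f htime hIDE 2 hcap2 (by norm_num) (by norm_num) ∅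
      (fun ζ hζ _ => hf2z ζ hζ.1.le hζ.2) (hQzero_init N f htime hIDE 2)
  have hB0 : ∀ θ ∈ Set.Icc (0:ℝ) 1, queueOf N f.fplus f.fminus 3 θ = 0 :=
    P_zero N f htime hIDE 3 hcap3 (by norm_num) (by norm_num) ∅
      (fun ζ hζ _ => hf3z ζ hζ.1.le hζ.2) (hQzero_init N f htime hIDE 3)
  have hg0 : ∀ ζ ∈ Set.Ioo (0:ℝ) 1, f.fplus 0 ζ = 2 ∧ f.fplus 1 ζ = 0 := by
    intro ζ hζ
    refine (hGf ζ hζ.1.le).1 ?_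
    rw [hA0 ζ ⟨hζ.1.le, hζ.2.le⟩, hB0 ζ ⟨hζ.1.le, hζ.2.le⟩]
    norm_num
  have hA1 : ∀ θ ∈ Set.Icc (1:ℝ) 2, queueOf N f.fplus f.fminus 2 θ = θ - 1 := by
    intro θ hθ
    have := P_inc N f htime hIDE 2 hcap2 (a := 1) (b := 2) (by norm_num) (by norm_num)
      ∅ (fun ζ hζ _ => by
        rw [hf2 ζ hζ.1.le]
        exact (hg0 (ζ - 1) ⟨by linarith [hζ.1], by linarith [hζ.2]⟩).1) θ hθ
    rw [hA0 1 ⟨by norm_num, le_refl _⟩] at this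
    linarith
  have hB1 : ∀ θ ∈ Set.Icc (1:ℝ) 2, queueOf N f.fplus f.fminus 3 θ = 0 := by
    refine P_zero N f htime hIDE 3 hcap3 (by norm_num) (by norm_num) ∅
      (fun ζ hζ _ => by
        rw [hf3 ζ hζ.1.le]
        exact (hg0 (ζ - 1) ⟨by linarith [hζ.1], by linarith [hζ.2]⟩).2)
      (hB0 1 ⟨by norm_num, le_refl _⟩)
  have hg1 : ∀ ζ ∈ Set.Ioo (1:ℝ) 2, f.fplus 0 ζ = 2 ∧ f.fplus 1 ζ = 0 := by
    intro ζ hζ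
    refine (hGf ζ (by linarith [hζ.1])).1 ?_
    rw [hA1 ζ ⟨hζ.1.le, hζ.2.le⟩, hB1 ζ ⟨hζ.1.le, hζ.2.le⟩]
    linarith [hζ.2]
  have hA2 : ∀ θ ∈ Set.Icc (2:ℝ) 3, queueOf N f.fplus f.fminus 2 θ = θ - 1 := by
    intro θ hθ
    have := P_inc N f htime hIDE 2 hcap2 (a := 2) (b := 3) (by norm_num) (by norm_num)
      ∅ (fun ζ hζ _ => by
        rw [hf2 ζ (by linarith [hζ.1])]
        exact (hg1 (ζ - 1) ⟨by linarith [hζ.1], by linarith [hζ.2]⟩).1) θ hθ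
    rw [hA1 2 ⟨by norm_num, le_refl _⟩] at this
    linarith
  have hB2 : ∀ θ ∈ Set.Icc (2:ℝ) 3, queueOf N f.fplus f.fminus 3 θ = 0 := by
    refine P_zero N f htime hIDE 3 hcap3 (by norm_num) (by norm_num) ∅
      (fun ζ hζ _ => by
        rw [hf3 ζ (by linarith [hζ.1])]
        exact (hg1 (ζ - 1) ⟨by linarith [hζ.1], by linarith [hζ.2]⟩).2)
      (hB1 2 ⟨by norm_num, le_refl _⟩)
  have hg2 : ∀ ζ ∈ Set.Ioo (2:ℝ) 3, f.fplus 0 ζ = 0 ∧ f.fplus 1 ζ = 2 := by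
    intro ζ hζ
    refine (hGf ζ (by linarith [hζ.1])).2 ?_
    rw [hA2 ζ ⟨hζ.1.le, hζ.2.le⟩, hB2 ζ ⟨hζ.1.le, hζ.2.le⟩]
    linarith [hζ.1]
  have hA3 : ∀ θ ∈ Set.Icc (3:ℝ) (7/2), queueOf N f.fplus f.fminus 2 θ = 5 - θ := by
    intro θ hθ
    have := P_dec N f htime hIDE 2 hcap2 (a := 3) (b := 7/2) (by norm_num) (by norm_num)
      ∅ (fun ζ hζ _ => by
        rw [hf2 ζ (by linarith [hζ.1])]
        exact (hg2 (ζ - 1) ⟨by linarith [hζ.1], by linarith [hζ.2]⟩).1)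
      (by rw [hA2 3 ⟨by norm_num, le_refl _⟩]; norm_num) θ hθ
    rw [hA2 3 ⟨by norm_num, le_refl _⟩] at this
    linarith
  have hB3 : ∀ θ ∈ Set.Icc (3:ℝ) 4, queueOf N f.fplus f.fminus 3 θ = θ - 3 := by
    intro θ hθ
    have := P_inc N f htime hIDE 3 hcap3 (a := 3) (b := 4) (by norm_num) (by norm_num)
      ∅ (fun ζ hζ _ => by
        rw [hf3 ζ (by linarith [hζ.1])]
        exact (hg2 (ζ - 1) ⟨by linarith [hζ.1], by linarith [hζ.2]⟩).2) θ hθ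
    rw [hB2 3 ⟨by norm_num, le_refl _⟩] at this
    linarith
  have hg3 : ∀ ζ ∈ Set.Ioo (3:ℝ) (7/2), f.fplus 0 ζ = 0 ∧ f.fplus 1 ζ = 2 := by
    intro ζ hζ
    refine (hGf ζ (by linarith [hζ.1])).2 ?_
    rw [hA3 ζ ⟨hζ.1.le, hζ.2.le⟩, hB3 ζ ⟨hζ.1.le, by linarith [hζ.2]⟩]
    linarith [hζ.2]
  have hA4 : ∀ θ ∈ Set.Icc (7/2:ℝ) (9/2), queueOf N f.fplus f.fminus 2 θ = 5 - θ := by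
    intro θ hθ
    have := P_dec N f htime hIDE 2 hcap2 (a := 7/2) (b := 9/2) (by norm_num) (by norm_num)
      ({4} : Finset ℝ) (fun ζ hζ hs => by
        rw [hf2 ζ (by linarith [hζ.1])]
        rcases lt_trichotomy ζ 4 with h | h | h
        · exact (hg2 (ζ - 1) ⟨by linarith [hζ.1], by linarith⟩).1
        · exact absurd (Finset.mem_singleton.mpr h) hs
        · exact (hg3 (ζ - 1) ⟨by linarith, by linarith [hζ.2]⟩).1)
      (by rw [hA3 (7/2) ⟨by norm_num, le_refl _⟩]; norm_num) θ hθ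
    rw [hA3 (7/2) ⟨by norm_num, le_refl _⟩] at this
    linarith
  have hB4 : ∀ θ ∈ Set.Icc (4:ℝ) (9/2), queueOf N f.fplus f.fminus 3 θ = θ - 3 := by
    intro θ hθ
    have := P_inc N f htime hIDE 3 hcap3 (a := 4) (b := 9/2) (by norm_num) (by norm_num)
      ∅ (fun ζ hζ _ => by
        rw [hf3 ζ (by linarith [hζ.1])]
        exact (hg3 (ζ - 1) ⟨by linarith [hζ.1], by linarith [hζ.2]⟩).2) θ hθ
    rw [hB3 4 ⟨by norm_num, le_refl _⟩] at this
    linarith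
  have hg4 : ∀ ζ ∈ Set.Ioo (7/2:ℝ) (9/2), f.fplus 0 ζ = 2 := by
    intro ζ hζ
    refine ((hGf ζ (by linarith [hζ.1])).1 ?_).1
    rw [hA4 ζ ⟨hζ.1.le, hζ.2.le⟩]
    rcases le_or_gt ζ 4 with h | h
    · rw [hB3 ζ ⟨by linarith [hζ.1], h⟩]; linarith [hζ.1]
    · rw [hB4 ζ ⟨h.le, hζ.2.le⟩]; linarith [hζ.1]
  refine ⟨?_, ?_, fun ζ hζ _ => hg4 ζ hζ⟩
  · have := hA4 (9/2) ⟨by norm_num, le_refl _⟩; linarith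
  · have := hB4 (9/2) ⟨by norm_num, le_refl _⟩; linarith

end Main

theorem ide_oscillating_queues'
    (N : Network (Fin 5) (Fin 5))
    (htail : N.tail = ![0, 0, 1, 2, 3])
    (hhead : N.head = ![1, 2, 4, 3, 4])
    (hcap : N.cap = ![2, 2, 1, 1, 1])
    (htime : ∀ e, N.time e = 1)
    (hsink : N.sink = 4)
    (hu : ∀ w θ, N.u w θ = if w = 0 ∧ 0 ≤ θ then 2 else 0) :
    ∀ f : FlowOverTime N, IsIDE N f → ∀ k : ℕ, 1 ≤ k →
      queueOf N f.fplus f.fminus 2 (4 * k + (2:ℝ) ^ (-(k:ℤ))) = 1 - (2:ℝ) ^ (-(k:ℤ)) ∧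
      queueOf N f.fplus f.fminus 3 (4 * k + (2:ℝ) ^ (-(k:ℤ))) = 2 - (2:ℝ) ^ (-(k:ℤ)) ∧
      queueOf N f.fplus f.fminus 2 (4 * k + (2:ℝ) ^ (-(k:ℤ)) + 2) = 3 - (2:ℝ) ^ (-(k:ℤ)) ∧
      queueOf N f.fplus f.fminus 3 (4 * k + 2) = 0 := by
  intro f hIDE
  have inv : ∀ k : ℕ, 1 ≤ k → ∀ ε T : ℝ, ε = (2:ℝ) ^ (-(k:ℤ)) → T = 4 * k + ε →
      queueOf N f.fplus f.fminus 2 T = 1 - ε ∧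
      queueOf N f.fplus f.fminus 3 T = 2 - ε ∧
      ∃ s : Finset ℝ, ∀ ζ ∈ Set.Ioo (T - 1) T, ζ ∉ s → f.fplus 0 ζ = 2 := by
    intro k hk
    induction k with
    | zero => omega
    | succ n ih =>
      intro ε T hε hT
      rcases Nat.lt_or_ge 1 (n + 1) with h | h
      · -- inductive step : n ≥ 1
        have hn : 1 ≤ n := by omega
        obtain ⟨hA, hB, s, hg⟩ := ih hn ((2:ℝ) ^ (-(n:ℤ))) (4 * n + (2:ℝ) ^ (-(n:ℤ))) rfl rfl
        set εn := (2:ℝ) ^ (-(n:ℤ)) with hεn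
        have hεpos : 0 < εn := by positivity
        have hεle : εn ≤ 1/2 := by
          rw [hεn]
          calc (2:ℝ) ^ (-(n:ℤ)) ≤ (2:ℝ) ^ (-(1:ℤ)) := by
                apply zpow_le_zpow_right₀ (by norm_num)
                omega
          _ = 1/2 := by norm_num
        have hTn : (4:ℝ) ≤ 4 * n + εn := by
          have : (1:ℝ) ≤ (n:ℝ) := by exact_mod_cast hn
          linarith
        obtain ⟨hs1, hs2, hs3, hs4, hs5⟩ := step_lemma N f htail hhead hcap htime hsink hu
          hIDE εn (4 * n + εn) hεpos hεle hTn hA hB s hg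
        have hkey : ε = εn / 2 := by
          rw [hε, hεn]
          have h1 : (-(((n:ℕ)+1):ℤ)) = -(n:ℤ) - 1 := by push_cast; ring
          rw [show (-(↑(n+1)):ℤ) = -(n:ℤ) - 1 by push_cast; ring,
            zpow_sub₀ (by norm_num : (2:ℝ) ≠ 0)]
          norm_num
        have hT2 : T = 4 * (n:ℝ) + εn + 4 - εn / 2 := by
          rw [hT, hkey]; push_cast; ring
        have hT3 : T - 1 = 4 * (n:ℝ) + εn + 3 - εn / 2 := by rw [hT2]; ring
        refine ⟨?_, ?_, ⟨{4 * (n:ℝ) + εn + 3}, ?_⟩⟩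
        · rw [hT2, hkey]; convert hs3 using 2 <;> ring
        · rw [hT2, hkey]; convert hs4 using 2 <;> ring
        · intro ζ hζ hmem
          rw [hT3, hT2] at hζ
          refine hs5 ζ ⟨by linarith [hζ.1], by linarith [hζ.2]⟩ ?_
          simpa using hmem
      · -- base case : n + 1 = 1
        have hn : n = 0 := by omega
        subst hn
        have hb := base_lemma N f htail hhead hcap htime hsink hu hIDE
        have hε2 : ε = 1/2 := by rw [hε]; norm_num
        have hT2 : T = 9/2 := by rw [hT, hε2]; push_cast; norm_num
        refine ⟨?_, ?_, ⟨∅, ?_⟩⟩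
        · rw [hT2, hε2]; exact hb.1.trans (by norm_num)
        · rw [hT2, hε2]; exact hb.2.1.trans (by norm_num)
        · intro ζ hζ hmem
          rw [hT2] at hζ
          exact hb.2.2 ζ ⟨by linarith [hζ.1], hζ.2⟩ hmem
  intro k hk
  obtain ⟨hA, hB, s, hg⟩ := inv k hk ((2:ℝ) ^ (-(k:ℤ))) (4 * k + (2:ℝ) ^ (-(k:ℤ))) rfl rfl
  have hεpos : 0 < (2:ℝ) ^ (-(k:ℤ)) := by positivity
  have hεle : (2:ℝ) ^ (-(k:ℤ)) ≤ 1/2 := by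
    calc (2:ℝ) ^ (-(k:ℤ)) ≤ (2:ℝ) ^ (-(1:ℤ)) := by
          apply zpow_le_zpow_right₀ (by norm_num)
          omega
    _ = 1/2 := by norm_num
  have hTn : (4:ℝ) ≤ 4 * k + (2:ℝ) ^ (-(k:ℤ)) := by
    have : (1:ℝ) ≤ (k:ℝ) := by exact_mod_cast hk
    linarith
  obtain ⟨hs1, hs2, -, -, -⟩ := step_lemma N f htail hhead hcap htime hsink hu hIDE
    ((2:ℝ) ^ (-(k:ℤ))) (4 * k + (2:ℝ) ^ (-(k:ℤ))) hεpos hεle hTn hA hB s hg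
  refine ⟨hA, hB, hs1, ?_⟩
  rw [show (4 * (k:ℝ) + 2) = 4 * (k:ℝ) + (2:ℝ) ^ (-(k:ℤ)) + 2 - (2:ℝ) ^ (-(k:ℤ)) by ring]
  exact hs2

/-- In the five-node network `N₀` (nodes `s=0, v=1, w=2, x=3, t=4`,
edges `sv=0, sw=1, vt=2, wx=3, xt=4`, all travel times `1`, capacities `2,2,1,1,1`,
sink `t`) with everlasting constant inflow rate `2` at `s`, every IDE flow satisfies,
for every integer `k ≥ 1`: `q_vt(4k+2^{−k}) = 1−2^{−k}`, `q_wx(4k+2^{−k}) = 2−2^{−k}`,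
`q_vt(4k+2^{−k}+2) = 3−2^{−k}` and `q_wx(4k+2) = 0`. -/
theorem ide_oscillating_queues
    (N : Network (Fin 5) (Fin 5))
    (htail : N.tail = ![0, 0, 1, 2, 3])
    (hhead : N.head = ![1, 2, 4, 3, 4])
    (hcap : N.cap = ![2, 2, 1, 1, 1])
    (htime : ∀ e, N.time e = 1)
    (hsink : N.sink = 4)
    (hu : ∀ w θ, N.u w θ = if w = 0 ∧ 0 ≤ θ then 2 else 0) :
    ∀ f : FlowOverTime N, IsIDE N f → ∀ k : ℕ, 1 ≤ k →
      queueOf N f.fplus f.fminus 2 (4 * k + (2:ℝ) ^ (-(k:ℤ))) = 1 - (2:ℝ) ^ (-(k:ℤ)) ∧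
      queueOf N f.fplus f.fminus 3 (4 * k + (2:ℝ) ^ (-(k:ℤ))) = 2 - (2:ℝ) ^ (-(k:ℤ)) ∧
      queueOf N f.fplus f.fminus 2 (4 * k + (2:ℝ) ^ (-(k:ℤ)) + 2) = 3 - (2:ℝ) ^ (-(k:ℤ)) ∧
      queueOf N f.fplus f.fminus 3 (4 * k + 2) = 0 :=
  ide_oscillating_queues' N htail hhead hcap htime hsink hu
end
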